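/- arXiv:1604.04756 — 6 statements merged into one kernel-verified Lean document; each statement's English description precedes it below -/
import Mathlib

section
/- Suppose the measure-preserving action of the countable group G on the standard probability space (X, μ) is ergodic and not essentially transitive. If a sequence (U_n) in the full group [G⋉X] satisfies condition (b) (it asymptotically commutes with every element of [G⋉X]), then it satisfies condition (a) (for every measurable subset A ⊆ X, μ(U_n°(A) △ A) → 0 as n → ∞). -/
open MeasureTheory Filter Set
open scoped Classical ENNReal
set_option linter.unusedSectionVars false
set_option linter.unusedVariables false

namespace Stmt0

variable {G X : Type*}

/-- The transformation `U° : x ↦ U x • x` associated with a map `U : X → G`. -/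
def fgMap [SMul G X] (U : X → G) : X → X := fun x => U x • x

/-- The product `U · V` in the full group of the transformation-groupoid `G ⋉ X`:
`(U·V)(x) = U(V°(x)) · V(x)`. -/
def fgMul [Group G] [MulAction G X] (U V : X → G) : X → G :=
  fun x => U (fgMap V x) * V x

/-- Membership in the full group `[G ⋉ X]`: `U : X → G` is measurable and the map
`U° : x ↦ U x • x` is, modulo null sets, a measure-preserving bijection of `(X, μ)`. -/
def IsFG [Group G] [MulAction G X] [MeasurableSpace G] [MeasurableSpace X]
    (μ : Measure X) (U : X → G) : Prop :=
  Measurable U ∧ MeasurePreserving (fgMap U) μ μ ∧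
    ∃ V : X → G, Measurable V ∧ MeasurePreserving (fgMap V) μ μ ∧
      (∀ᵐ x ∂μ, fgMap V (fgMap U x) = x) ∧ (∀ᵐ x ∂μ, fgMap U (fgMap V x) = x)

section Aux
variable [Group G] [Countable G] [MeasurableSpace G] [MeasurableSingletonClass G]
  [MeasurableSpace X] [MulAction G X]

def tr (g : G) (B : Set X) : Set X := (fun x : X => g⁻¹ • x) ⁻¹' B
lemma mem_tr {g : G} {B : Set X} {x : X} : x ∈ tr g B ↔ g⁻¹ • x ∈ B := Iff.rfl
lemma smul_mem_tr {g : G} {B : Set X} {x : X} (hx : x ∈ B) : g • x ∈ tr g B := by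
  simp [mem_tr, inv_smul_smul, hx]
lemma measurableSet_tr (hmeas : ∀ g : G, Measurable fun x : X => g • x)
    {g : G} {B : Set X} (hB : MeasurableSet B) : MeasurableSet (tr g B) := (hmeas g⁻¹) hB
lemma measurable_fgMap (hmeas : ∀ g : G, Measurable fun x : X => g • x)
    {U : X → G} (hUm : Measurable U) : Measurable (fgMap U) := by
  intro B hB
  have h : fgMap U ⁻¹' B = ⋃ g : G, (U ⁻¹' {g}) ∩ ((fun x => g • x) ⁻¹' B) := by
    ext x
    simp only [mem_preimage, mem_iUnion, mem_inter_iff, mem_singleton_iff, fgMap]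
    exact ⟨fun h => ⟨U x, rfl, h⟩, fun ⟨g, hg, h⟩ => by rw [hg]; exact h⟩
  rw [h]
  exact MeasurableSet.iUnion fun g => (hUm (measurableSet_singleton g)).inter (hmeas g hB)

lemma image_fgMap_null (μ : Measure X)
    (hmp : ∀ g : G, MeasurePreserving (fun x : X => g • x) μ μ)
    (U : X → G) {Z : Set X} (hZ : μ Z = 0) : μ (fgMap U '' Z) = 0 := by
  have hsub : fgMap U '' Z ⊆ ⋃ g : G, (fun x : X => g⁻¹ • x) ⁻¹' Z := by
    rintro y ⟨x, hx, rfl⟩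
    exact mem_iUnion.2 ⟨U x, by simpa [fgMap, inv_smul_smul] using hx⟩
  refine measure_mono_null hsub (measure_iUnion_null fun g => ?_)
  exact (hmp g⁻¹).quasiMeasurePreserving.preimage_null hZ

noncomputable def pieceV (g : G) (B : Set X) : X → G :=
  fun x => if x ∈ B then g else if x ∈ tr g B then g⁻¹ else 1

variable {g : G} {B : Set X}

lemma tr_disj (hd : ∀ x ∈ B, g • x ∉ B) : ∀ x ∈ B, x ∉ tr g B := by
  intro x hx hx'
  exact hd _ hx' (by simpa [smul_inv_smul] using hx)

lemma fgMap_pieceV_of_mem (hd : ∀ x ∈ B, g • x ∉ B) {x : X} (hx : x ∈ B) :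
    fgMap (pieceV g B) x = g • x := by simp [fgMap, pieceV, hx]

lemma fgMap_pieceV_of_mem_tr (hd : ∀ x ∈ B, g • x ∉ B) {x : X} (hx : x ∈ tr g B) :
    fgMap (pieceV g B) x = g⁻¹ • x := by
  have hxB : x ∉ B := fun h => tr_disj hd x h hx
  simp [fgMap, pieceV, hxB, hx]

lemma fgMap_pieceV_of_not_mem (hd : ∀ x ∈ B, g • x ∉ B) {x : X}
    (hx : x ∉ B) (hx' : x ∉ tr g B) : fgMap (pieceV g B) x = x := by
  simp [fgMap, pieceV, hx, hx']

lemma pieceV_invol (hd : ∀ x ∈ B, g • x ∉ B) :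
    ∀ x, fgMap (pieceV g B) (fgMap (pieceV g B) x) = x := by
  intro x
  by_cases hx : x ∈ B
  · rw [fgMap_pieceV_of_mem hd hx, fgMap_pieceV_of_mem_tr hd (smul_mem_tr hx), inv_smul_smul]
  · by_cases hx' : x ∈ tr g B
    · rw [fgMap_pieceV_of_mem_tr hd hx', fgMap_pieceV_of_mem hd (mem_tr.1 hx'), smul_inv_smul]
    · rw [fgMap_pieceV_of_not_mem hd hx hx', fgMap_pieceV_of_not_mem hd hx hx']

lemma measurable_pieceV (hmeas : ∀ g : G, Measurable fun x : X => g • x)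
    (hB : MeasurableSet B) : Measurable (pieceV g B) := by
  unfold pieceV
  exact Measurable.ite hB measurable_const
    (Measurable.ite (measurableSet_tr hmeas hB) measurable_const measurable_const)

lemma preimage_fgMap_pieceV (hd : ∀ x ∈ B, g • x ∉ B) (S : Set X) :
    fgMap (pieceV g B) ⁻¹' S =
      (B ∩ (fun x : X => g • x) ⁻¹' S) ∪ ((tr g B) ∩ (fun x : X => g⁻¹ • x) ⁻¹' S)
        ∪ (S ∩ (B ∪ tr g B)ᶜ) := by
  ext x
  by_cases hx : x ∈ B
  · have h1 : x ∉ tr g B := tr_disj hd x hx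
    simp only [mem_preimage, fgMap_pieceV_of_mem hd hx, mem_union, mem_inter_iff,
      mem_compl_iff, hx, h1]
    tauto
  · by_cases hx' : x ∈ tr g B
    · simp only [mem_preimage, fgMap_pieceV_of_mem_tr hd hx', mem_union, mem_inter_iff,
        mem_compl_iff, hx, hx']
      tauto
    · simp only [mem_preimage, fgMap_pieceV_of_not_mem hd hx hx', mem_union, mem_inter_iff,
        mem_compl_iff, hx, hx']
      tauto

lemma mp_fgMap_pieceV (μ : Measure X) [IsProbabilityMeasure μ]
    (hmeas : ∀ g : G, Measurable fun x : X => g • x)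
    (hmp : ∀ g : G, MeasurePreserving (fun x : X => g • x) μ μ)
    (hB : MeasurableSet B) (hd : ∀ x ∈ B, g • x ∉ B) :
    MeasurePreserving (fgMap (pieceV g B)) μ μ := by
  have hVm : Measurable (fgMap (pieceV g B)) :=
    measurable_fgMap hmeas (measurable_pieceV hmeas hB)
  refine ⟨hVm, ?_⟩
  ext S hS
  rw [Measure.map_apply hVm hS, preimage_fgMap_pieceV hd]
  have htrm : MeasurableSet (tr g B) := measurableSet_tr hmeas hB
  have h1 : μ (B ∩ (fun x : X => g • x) ⁻¹' S) = μ (tr g B ∩ S) := by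
    have : (fun x : X => g • x) ⁻¹' (tr g B ∩ S) = B ∩ (fun x : X => g • x) ⁻¹' S := by
      ext x; simp [mem_tr, inv_smul_smul]
    rw [← this, (hmp g).measure_preimage (htrm.inter hS).nullMeasurableSet]
  have h2 : μ (tr g B ∩ (fun x : X => g⁻¹ • x) ⁻¹' S) = μ (B ∩ S) := by
    have : (fun x : X => g⁻¹ • x) ⁻¹' (B ∩ S) = tr g B ∩ (fun x : X => g⁻¹ • x) ⁻¹' S := by
      ext x; simp [mem_tr]
    rw [← this, (hmp g⁻¹).measure_preimage (hB.inter hS).nullMeasurableSet]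
  have hdisjBtr : Disjoint B (tr g B) := disjoint_left.2 (tr_disj hd)
  have hd1 : Disjoint (B ∩ (fun x : X => g • x) ⁻¹' S) (tr g B ∩ (fun x : X => g⁻¹ • x) ⁻¹' S) :=
    hdisjBtr.mono inter_subset_left inter_subset_left
  have hd2 : Disjoint ((B ∩ (fun x : X => g • x) ⁻¹' S) ∪ (tr g B ∩ (fun x : X => g⁻¹ • x) ⁻¹' S))
      (S ∩ (B ∪ tr g B)ᶜ) := by
    refine disjoint_right.2 fun x hx => ?_
    have := hx.2
    simp only [mem_compl_iff, mem_union, not_or] at this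
    simp only [mem_union, mem_inter_iff, not_or]
    exact ⟨fun h => this.1 h.1, fun h => this.2 h.1⟩
  rw [measure_union hd2 (hS.inter (hB.union htrm).compl),
    measure_union hd1 (htrm.inter ((hmeas g⁻¹) hS)), h1, h2]
  have hsplit : μ (S ∩ B) + μ (S ∩ tr g B) = μ (S ∩ (B ∪ tr g B)) := by
    rw [inter_union_distrib_left]
    exact (measure_union ((hdisjBtr.mono inter_subset_right inter_subset_right))
      (hS.inter htrm)).symm
  calc μ (tr g B ∩ S) + μ (B ∩ S) + μ (S ∩ (B ∪ tr g B)ᶜ)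
      = μ (S ∩ (B ∪ tr g B)) + μ (S ∩ (B ∪ tr g B)ᶜ) := by
        rw [← hsplit, inter_comm S B, inter_comm S (tr g B)]; ring
    _ = μ S := by
        rw [← measure_union (disjoint_compl_right.mono inter_subset_right inter_subset_right)
          (hS.inter (hB.union htrm).compl)]
        congr 1
        rw [← inter_union_distrib_left, union_compl_self, inter_univ]

lemma isFG_pieceV (μ : Measure X) [IsProbabilityMeasure μ]
    (hmeas : ∀ g : G, Measurable fun x : X => g • x)
    (hmp : ∀ g : G, MeasurePreserving (fun x : X => g • x) μ μ)
    (hB : MeasurableSet B) (hd : ∀ x ∈ B, g • x ∉ B) : IsFG μ (pieceV g B) :=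
  ⟨measurable_pieceV hmeas hB, mp_fgMap_pieceV μ hmeas hmp hB hd,
    pieceV g B, measurable_pieceV hmeas hB, mp_fgMap_pieceV μ hmeas hmp hB hd,
    ae_of_all _ (pieceV_invol hd), ae_of_all _ (pieceV_invol hd)⟩


lemma exists_sep (X : Type*) [MeasurableSpace X] [StandardBorelSpace X] :
    ∃ D : ℕ → Set X, (∀ n, MeasurableSet (D n)) ∧
      ∀ x y : X, (∀ n, x ∈ D n ↔ y ∈ D n) → x = y := by
  have h : HasCountableSeparatingOn X MeasurableSet univ := inferInstance
  obtain ⟨S, hSc, hSm, hSsep⟩ := h.1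
  have hc : (insert univ S : Set (Set X)).Countable := hSc.insert _
  obtain ⟨D, hD⟩ := (hc.exists_eq_range (insert_nonempty _ _))
  refine ⟨D, fun n => ?_, fun x y hxy => ?_⟩
  · have : D n ∈ insert univ S := hD ▸ mem_range_self n
    rcases this with h | h
    · rw [h]; exact MeasurableSet.univ
    · exact hSm _ h
  · refine hSsep x (mem_univ x) y (mem_univ y) fun s hs => ?_
    have : s ∈ insert univ S := mem_insert_of_mem _ hs
    rw [hD] at this
    obtain ⟨n, rfl⟩ := this
    exact hxy n

lemma measurableSet_fix {D : ℕ → Set X} (hD : ∀ n, MeasurableSet (D n))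
    (hsep : ∀ x y : X, (∀ n, x ∈ D n ↔ y ∈ D n) → x = y)
    {f : X → X} (hf : Measurable f) : MeasurableSet {x | f x = x} := by
  have h : {x | f x = x} = ⋂ n, ((D n ∩ f ⁻¹' D n) ∪ ((D n)ᶜ ∩ (f ⁻¹' D n)ᶜ)) := by
    ext x
    simp only [mem_setOf_eq, mem_iInter, mem_union, mem_inter_iff, mem_compl_iff, mem_preimage]
    constructor
    · intro h n; rw [h]; tauto
    · intro h
      refine (hsep (f x) x fun n => ?_).symm ▸ rfl
      rcases h n with ⟨h1, h2⟩ | ⟨h1, h2⟩ <;> tauto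
  rw [h]
  exact MeasurableSet.iInter fun n =>
    ((hD n).inter (hf (hD n))).union (((hD n).compl).inter (hf (hD n)).compl)


lemma null_bad (μ : Measure X) [IsProbabilityMeasure μ]
    (hmeas : ∀ g : G, Measurable fun x : X => g • x)
    (herg : ∀ A : Set X, MeasurableSet A → (∀ g : G, (fun x : X => g • x) ⁻¹' A = A) →
      μ A = 0 ∨ μ Aᶜ = 0)
    (hnotess : ¬ ∃ x : X, μ (MulAction.orbit G x)ᶜ = 0)
    [MeasurableSingletonClass X]
    {D : ℕ → Set X} (hD : ∀ n, MeasurableSet (D n))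
    (hsep : ∀ x y : X, (∀ n, x ∈ D n ↔ y ∈ D n) → x = y)
    {A : Set X} (hA : MeasurableSet A) :
    μ {x | x ∈ A ∧ ∀ g : G, g • x ∈ A → g • x = x} = 0 := by
  set N := {x | x ∈ A ∧ ∀ g : G, g • x ∈ A → g • x = x} with hNdef
  have hNm : MeasurableSet N := by
    have : N = A ∩ ⋂ g : G, (((fun x : X => g • x) ⁻¹' A)ᶜ ∪ {x | g • x = x}) := by
      ext x
      simp only [hNdef, mem_setOf_eq, mem_inter_iff, mem_iInter, mem_union, mem_compl_iff,
        mem_preimage]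
      constructor
      · rintro ⟨h1, h2⟩
        exact ⟨h1, fun g => by by_cases h : g • x ∈ A; exacts [Or.inr (h2 g h), Or.inl h]⟩
      · rintro ⟨h1, h2⟩
        refine ⟨h1, fun g hg => ?_⟩
        rcases h2 g with h | h
        · exact absurd hg h
        · exact h
    rw [this]
    exact hA.inter (MeasurableSet.iInter fun g =>
      (((hmeas g) hA).compl).union (measurableSet_fix hD hsep (hmeas g)))
  -- N meets each orbit at most once
  have honce : ∀ x ∈ N, ∀ y ∈ N, (∃ g : G, g • x = y) → x = y := by
    rintro x hx y hy ⟨g, rfl⟩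
    exact (hx.2 g hy.1).symm
  by_contra hN
  -- saturation
  set sat : Set X → Set X := fun S => ⋃ g : G, (fun x : X => g • x) ⁻¹' S with hsat
  have hsatm : ∀ {S : Set X}, MeasurableSet S → MeasurableSet (sat S) :=
    fun hS => MeasurableSet.iUnion fun g => (hmeas g) hS
  have hsatinv : ∀ (S : Set X) (h : G), (fun x : X => h • x) ⁻¹' (sat S) = sat S := by
    intro S h
    ext x
    simp only [hsat, mem_preimage, mem_iUnion]
    constructor
    · rintro ⟨g, hg⟩; exact ⟨g * h, by rwa [mul_smul]⟩
    · rintro ⟨g, hg⟩; exact ⟨g * h⁻¹, by rwa [mul_smul, inv_smul_smul]⟩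
  have hsub : ∀ S : Set X, S ⊆ sat S := fun S x hx =>
    mem_iUnion.2 ⟨1, by simpa [one_smul] using hx⟩
  have hsatdisj : ∀ S T : Set X, S ⊆ N → T ⊆ N → Disjoint S T → Disjoint (sat S) (sat T) := by
    intro S T hSN hTN hST
    refine disjoint_left.2 fun x hxS hxT => ?_
    obtain ⟨g, hg⟩ := mem_iUnion.1 hxS
    obtain ⟨h, hh⟩ := mem_iUnion.1 hxT
    have heq : g • x = h • x := by
      refine honce _ (hSN hg) _ (hTN hh) ⟨h * g⁻¹, ?_⟩
      rw [mul_smul, inv_smul_smul]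
    have hgx : g • x ∈ S := hg
    have hhx : h • x ∈ T := hh
    rw [← heq] at hhx
    exact hST.le_bot ⟨hgx, hhx⟩
  have hdk : ∀ n : ℕ, μ (N ∩ D n) = 0 ∨ μ (N \ D n) = 0 := by
    intro n
    rcases herg (sat (N ∩ D n)) (hsatm (hNm.inter (hD n))) (hsatinv _) with h | h
    · exact Or.inl (measure_mono_null (hsub _) h)
    · refine Or.inr (measure_mono_null ?_ h)
      have hdisj : Disjoint (sat (N ∩ D n)) (sat (N \ D n)) :=
        hsatdisj _ _ inter_subset_left (fun x hx => hx.1)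
          (disjoint_left.2 fun x hx hx' => hx'.2 hx.2)
      exact (hsub _).trans (subset_compl_iff_disjoint_left.2 hdisj)
  set C : ℕ → Set X := fun n => if μ (N \ D n) = 0 then D n else (D n)ᶜ with hC
  have hCnull : ∀ n, μ (N \ C n) = 0 := by
    intro n
    by_cases h : μ (N \ D n) = 0
    · simp only [hC, if_pos h]; exact h
    · simp only [hC, if_neg h]
      have : N \ (D n)ᶜ = N ∩ D n := by ext x; simp [mem_diff]
      rw [this]
      exact (hdk n).resolve_right h
  set K := N ∩ ⋂ n, C n with hK
  have hNK : μ (N \ K) = 0 := by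
    have : N \ K ⊆ ⋃ n, N \ C n := by
      intro x hx
      simp only [hK, mem_diff, mem_inter_iff, mem_iInter, not_and, not_forall] at hx
      obtain ⟨n, hn⟩ := hx.2 hx.1
      exact mem_iUnion.2 ⟨n, hx.1, hn⟩
    exact measure_mono_null this (measure_iUnion_null hCnull)
  have hKne : μ K ≠ 0 := by
    intro h
    apply hN
    have hb := measure_union_le (μ := μ) K (N \ K)
    have hcover : N ⊆ K ∪ (N \ K) := by
      intro x hx
      by_cases h' : x ∈ K
      exacts [Or.inl h', Or.inr ⟨hx, h'⟩]
    have hm := (measure_mono (μ := μ) hcover).trans hb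
    simpa [h, hNK] using hm
  have hKnonempty : K.Nonempty := nonempty_iff_ne_empty.2 fun h => hKne (by simp [h])
  obtain ⟨x₀, hx₀⟩ := hKnonempty
  have hKsub : K ⊆ {x₀} := by
    intro y hy
    have : y = x₀ := by
      refine hsep y x₀ fun n => ?_
      have h1 := (mem_iInter.1 hy.2) n
      have h2 := (mem_iInter.1 hx₀.2) n
      by_cases h : μ (N \ D n) = 0
      · simp only [hC, if_pos h] at h1 h2; simp [h1, h2]
      · simp only [hC, if_neg h, mem_compl_iff] at h1 h2; simp [h1, h2]
    simp [this]
  -- the orbit of the atom x₀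
  set O := ⋃ g : G, {g • x₀} with hO
  have hOm : MeasurableSet O := MeasurableSet.iUnion fun g => measurableSet_singleton _
  have hOinv : ∀ h : G, (fun x : X => h • x) ⁻¹' O = O := by
    intro h
    ext x
    simp only [hO, mem_preimage, mem_iUnion, mem_singleton_iff]
    constructor
    · rintro ⟨g, hg⟩
      exact ⟨h⁻¹ * g, by rw [mul_smul, ← hg, inv_smul_smul]⟩
    · rintro ⟨g, rfl⟩
      exact ⟨h * g, by rw [mul_smul]⟩
  rcases herg O hOm hOinv with h | h
  · refine hKne (measure_mono_null ?_ h)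
    refine hKsub.trans ?_
    intro y hy
    simp only [mem_singleton_iff] at hy
    exact hy ▸ mem_iUnion.2 ⟨1, by simp [one_smul]⟩
  · refine hnotess ⟨x₀, ?_⟩
    have : O = MulAction.orbit G x₀ := by
      ext y
      simp only [hO, mem_iUnion, mem_singleton_iff, MulAction.mem_orbit_iff]
      exact ⟨fun ⟨g, hg⟩ => ⟨g, hg.symm⟩, fun ⟨g, hg⟩ => ⟨g, hg.symm⟩⟩
    rwa [← this]


lemma tendsto_piece (μ : Measure X) [IsProbabilityMeasure μ]
    (hmeas : ∀ g : G, Measurable fun x : X => g • x)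
    (hmp : ∀ g : G, MeasurePreserving (fun x : X => g • x) μ μ)
    (U : ℕ → X → G) (hU : ∀ n, IsFG μ (U n))
    (hb : ∀ V : X → G, IsFG μ V →
      Tendsto (fun n => μ {x | fgMul (U n) V x ≠ fgMul V (U n) x}) atTop (nhds 0))
    {g : G} {B : Set X} (hB : MeasurableSet B) (hd : ∀ x ∈ B, g • x ∉ B)
    (hfix : ∀ x ∈ B, g • x ≠ x) :
    Tendsto (fun n => μ (B \ fgMap (U n) ⁻¹' (B ∪ tr g B))) atTop (nhds 0) := by
  have hV : IsFG μ (pieceV g B) := isFG_pieceV μ hmeas hmp hB hd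
  refine tendsto_of_tendsto_of_tendsto_of_le_of_le (tendsto_const_nhds)
    (hb (pieceV g B) hV) (fun n => zero_le) fun n => ?_
  obtain ⟨hUm, hUmp, W, hWm, hWmp, hWU, _⟩ := hU n
  set Z := {x | ¬ fgMap W (fgMap (U n) x) = x} with hZdef
  have hZ : μ Z = 0 := ae_iff.1 hWU
  have hsub : B \ fgMap (U n) ⁻¹' (B ∪ tr g B) ⊆
      {x | fgMul (U n) (pieceV g B) x ≠ fgMul (pieceV g B) (U n) x} ∪
        (Z ∪ (fun x : X => g • x) ⁻¹' Z) := by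
    rintro x ⟨hxB, hxnot⟩
    by_cases hxZ : x ∈ Z
    · exact Or.inr (Or.inl hxZ)
    by_cases hgxZ : g • x ∈ Z
    · exact Or.inr (Or.inr hgxZ)
    left
    simp only [mem_setOf_eq, hZdef, not_not] at hxZ hgxZ
    intro hcomm
    have hUx : fgMap (U n) x ∉ B := fun h => hxnot (Or.inl h)
    have hUx' : fgMap (U n) x ∉ tr g B := fun h => hxnot (Or.inr h)
    have h1 : fgMul (pieceV g B) (U n) x = U n x := by
      simp [fgMul, pieceV, hUx, hUx']
    have h2 : fgMul (U n) (pieceV g B) x = U n (g • x) * g := by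
      simp only [fgMul, fgMap_pieceV_of_mem hd hxB, pieceV, hxB, if_pos]
    rw [h1, h2] at hcomm
    have heq : fgMap (U n) (g • x) = fgMap (U n) x := by
      simp only [fgMap, ← hcomm, mul_smul]
    have : g • x = x := by rw [← hgxZ, heq, hxZ]
    exact hfix x hxB this
  calc μ (B \ fgMap (U n) ⁻¹' (B ∪ tr g B))
      ≤ μ ({x | fgMul (U n) (pieceV g B) x ≠ fgMul (pieceV g B) (U n) x} ∪
          (Z ∪ (fun x : X => g • x) ⁻¹' Z)) := measure_mono hsub
    _ ≤ μ {x | fgMul (U n) (pieceV g B) x ≠ fgMul (pieceV g B) (U n) x} +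
          μ (Z ∪ (fun x : X => g • x) ⁻¹' Z) := measure_union_le _ _
    _ = μ {x | fgMul (U n) (pieceV g B) x ≠ fgMul (pieceV g B) (U n) x} := by
        have h0 : μ (Z ∪ (fun x : X => g • x) ⁻¹' Z) = 0 :=
          measure_union_null hZ ((hmp g).quasiMeasurePreserving.preimage_null hZ)
        rw [h0, add_zero]


lemma main_pre [MeasurableSingletonClass X] (μ : Measure X) [IsProbabilityMeasure μ]
    (hmeas : ∀ g : G, Measurable fun x : X => g • x)
    (hmp : ∀ g : G, MeasurePreserving (fun x : X => g • x) μ μ)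
    (herg : ∀ A : Set X, MeasurableSet A → (∀ g : G, (fun x : X => g • x) ⁻¹' A = A) →
      μ A = 0 ∨ μ Aᶜ = 0)
    (hnotess : ¬ ∃ x : X, μ (MulAction.orbit G x)ᶜ = 0)
    {D : ℕ → Set X} (hD : ∀ n, MeasurableSet (D n))
    (hsep : ∀ x y : X, (∀ n, x ∈ D n ↔ y ∈ D n) → x = y)
    (U : ℕ → X → G) (hU : ∀ n, IsFG μ (U n))
    (hb : ∀ V : X → G, IsFG μ V →
      Tendsto (fun n => μ {x | fgMul (U n) V x ≠ fgMul V (U n) x}) atTop (nhds 0))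
    {A : Set X} (hA : MeasurableSet A) :
    Tendsto (fun n => μ (A \ fgMap (U n) ⁻¹' A)) atTop (nhds 0) := by
  rw [ENNReal.tendsto_nhds_zero]
  intro ε hε
  set N := {x | x ∈ A ∧ ∀ g : G, g • x ∈ A → g • x = x} with hNdef
  have hN0 : μ N = 0 := null_bad μ hmeas herg hnotess hD hsep hA
  set tN := toMeasurable μ N with htN
  have htN0 : μ tN = 0 := by rw [htN, measure_toMeasurable]; exact hN0
  -- the index type and the pieces
  set ι := G × ℕ × Bool with hι
  set Cg : G → Set X := fun g => {x | x ∈ A ∧ g • x ∈ A ∧ g • x ≠ x} with hCg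
  have hCgm : ∀ g : G, MeasurableSet (Cg g) := by
    intro g
    have : Cg g = A ∩ ((fun x : X => g • x) ⁻¹' A) ∩ {x | g • x = x}ᶜ := by
      ext x
      simp only [hCg, mem_setOf_eq, mem_inter_iff, mem_compl_iff, mem_preimage]
      tauto
    rw [this]
    exact (hA.inter ((hmeas g) hA)).inter (measurableSet_fix hD hsep (hmeas g)).compl
  set BI : ι → Set X := fun i =>
    Cg i.1 ∩ (if i.2.2 then (D i.2.1)ᶜ ∩ (fun x : X => i.1 • x) ⁻¹' (D i.2.1)
      else D i.2.1 ∩ ((fun x : X => i.1 • x) ⁻¹' (D i.2.1))ᶜ) with hBI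
  have hBIm : ∀ i : ι, MeasurableSet (BI i) := by
    rintro ⟨g, k, b⟩
    cases b
    · exact (hCgm g).inter ((hD k).inter ((hmeas g) (hD k)).compl)
    · exact (hCgm g).inter ((hD k).compl.inter ((hmeas g) (hD k)))
  have hBId : ∀ i : ι, ∀ x ∈ BI i, i.1 • x ∉ BI i := by
    rintro ⟨g, k, b⟩ x hx hx'
    simp only [hBI] at hx hx'
    cases b
    · simp only [Bool.false_eq_true, if_false, mem_inter_iff, mem_compl_iff,
        mem_preimage] at hx hx'
      exact hx.2.2 hx'.2.1
    · simp only [if_pos rfl, mem_inter_iff, mem_compl_iff, mem_preimage] at hx hx'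
      exact hx'.2.1 hx.2.2
  have hBIfix : ∀ i : ι, ∀ x ∈ BI i, i.1 • x ≠ x := fun i x hx => hx.1.2.2
  have hBIsub : ∀ i : ι, BI i ∪ tr i.1 (BI i) ⊆ A := by
    rintro i x (hx | hx)
    · exact hx.1.1
    · have : i.1⁻¹ • x ∈ Cg i.1 := (mem_tr.1 hx).1
      have h2 := this.2.1
      rwa [smul_inv_smul] at h2
  have hcover : A ⊆ N ∪ ⋃ i : ι, BI i := by
    intro x hx
    by_cases hxN : x ∈ N
    · exact Or.inl hxN
    right
    simp only [hNdef, mem_setOf_eq, hx, true_and, not_forall] at hxN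
    obtain ⟨g, hgA, hgx⟩ := hxN
    have hxC : x ∈ Cg g := ⟨hx, hgA, hgx⟩
    have hnot : ¬ ∀ k, g • x ∈ D k ↔ x ∈ D k := fun h => hgx (hsep _ _ h)
    obtain ⟨k, hk⟩ := not_forall.1 hnot
    by_cases hxD : x ∈ D k
    · have hgD : g • x ∉ D k := fun h => hk (iff_of_true h hxD)
      refine mem_iUnion.2 ⟨(g, k, false), hxC, ?_⟩
      simp only [Bool.false_eq_true, if_false, mem_inter_iff, mem_compl_iff, mem_preimage]
      exact ⟨hxD, hgD⟩
    · have hgD : g • x ∈ D k := by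
        by_contra hgD
        exact hk (iff_of_false hgD hxD)
      refine mem_iUnion.2 ⟨(g, k, true), hxC, ?_⟩
      simp only [if_pos rfl, mem_inter_iff, mem_compl_iff, mem_preimage]
      exact ⟨hxD, hgD⟩
  -- enumerate the pieces
  obtain ⟨e, he⟩ := exists_surjective_nat ι
  set S : ℕ → Set X := fun m => A \ (tN ∪ ⋃ i ∈ Finset.range m, BI (e i)) with hS
  have hSm : ∀ m, MeasurableSet (S m) := by
    intro m
    exact hA.diff ((measurableSet_toMeasurable μ N).union
      (MeasurableSet.biUnion (Finset.range m).countable_toSet fun i _ => hBIm (e i)))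
  have hSanti : Antitone S := by
    intro m m' hmm x hx
    refine ⟨hx.1, fun h => hx.2 ?_⟩
    rcases h with h | h
    · exact Or.inl h
    · right
      simp only [mem_iUnion] at h ⊢
      obtain ⟨i, hi, hxi⟩ := h
      exact ⟨i, Finset.mem_range.2 ((Finset.mem_range.1 hi).trans_le hmm), hxi⟩
  have hSempty : ⋂ m, S m = ∅ := by
    rw [eq_empty_iff_forall_notMem]
    intro x hx
    have hxA : x ∈ A := (mem_iInter.1 hx 0).1
    rcases hcover hxA with hxN | hxB
    · exact (mem_iInter.1 hx 0).2 (Or.inl (subset_toMeasurable μ N hxN))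
    · obtain ⟨i, hxi⟩ := mem_iUnion.1 hxB
      obtain ⟨m, rfl⟩ := he i
      refine (mem_iInter.1 hx (m + 1)).2 (Or.inr ?_)
      simp only [mem_iUnion]
      exact ⟨m, Finset.mem_range.2 (Nat.lt_succ_self m), hxi⟩
  have hStend : Tendsto (fun m => μ (S m)) atTop (nhds 0) := by
    have := tendsto_measure_iInter_atTop (fun m => (hSm m).nullMeasurableSet) hSanti
      ⟨0, measure_ne_top μ _⟩
    rwa [hSempty, measure_empty] at this
  obtain ⟨m, hm⟩ := (hStend.eventually (eventually_lt_nhds hε)).exists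
  -- the finite family of tendsto-zero bounds
  have hpiece : ∀ i : ι, Tendsto
      (fun n => μ (BI i \ fgMap (U n) ⁻¹' (BI i ∪ tr i.1 (BI i)))) atTop (nhds 0) :=
    fun i => tendsto_piece μ hmeas hmp U hU hb (hBIm i) (hBId i) (hBIfix i)
  set R : ℕ → ENNReal := fun n => μ tN + μ (S m) +
    ∑ j ∈ Finset.range m, μ (BI (e j) \ fgMap (U n) ⁻¹' (BI (e j) ∪ tr (e j).1 (BI (e j))))
    with hR
  have hRtend : Tendsto R atTop (nhds (μ (S m))) := by
    have hsum : Tendsto (fun n => ∑ j ∈ Finset.range m,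
        μ (BI (e j) \ fgMap (U n) ⁻¹' (BI (e j) ∪ tr (e j).1 (BI (e j))))) atTop (nhds 0) := by
      have := tendsto_finset_sum (Finset.range m) fun j _ => hpiece (e j)
      simpa using this
    have := (tendsto_const_nhds (x := μ tN + μ (S m)) (f := atTop)).add hsum
    simpa [hR, htN0] using this
  have hbound : ∀ n, μ (A \ fgMap (U n) ⁻¹' A) ≤ R n := by
    intro n
    have hsub : A \ fgMap (U n) ⁻¹' A ⊆ tN ∪ S m ∪
        ⋃ j ∈ Finset.range m, (BI (e j) \ fgMap (U n) ⁻¹' (BI (e j) ∪ tr (e j).1 (BI (e j)))) := by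
      rintro x ⟨hxA, hxnot⟩
      by_cases hxt : x ∈ tN
      · exact Or.inl (Or.inl hxt)
      by_cases hxB : x ∈ ⋃ j ∈ Finset.range m, BI (e j)
      · right
        simp only [mem_iUnion] at hxB ⊢
        obtain ⟨j, hj, hxj⟩ := hxB
        refine ⟨j, hj, hxj, fun h => hxnot ?_⟩
        exact mem_preimage.2 (hBIsub (e j) (mem_preimage.1 h))
      · refine Or.inl (Or.inr ⟨hxA, fun h => ?_⟩)
        rcases h with h | h
        · exact hxt h
        · exact hxB h
    calc μ (A \ fgMap (U n) ⁻¹' A)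
        ≤ μ (tN ∪ S m) + μ (⋃ j ∈ Finset.range m,
            (BI (e j) \ fgMap (U n) ⁻¹' (BI (e j) ∪ tr (e j).1 (BI (e j))))) := by
          refine (measure_mono hsub).trans (measure_union_le _ _)
      _ ≤ (μ tN + μ (S m)) + ∑ j ∈ Finset.range m,
            μ (BI (e j) \ fgMap (U n) ⁻¹' (BI (e j) ∪ tr (e j).1 (BI (e j)))) := by
          exact add_le_add (measure_union_le _ _) (measure_biUnion_finset_le _ _)
      _ = R n := rfl
  have hev : ∀ᶠ n in atTop, R n < ε := hRtend.eventually (eventually_lt_nhds hm)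
  filter_upwards [hev] with n hn
  exact (hbound n).trans hn.le


lemma image_symmDiff_le (μ : Measure X) [IsProbabilityMeasure μ]
    (hmeas : ∀ g : G, Measurable fun x : X => g • x)
    (hmp : ∀ g : G, MeasurePreserving (fun x : X => g • x) μ μ)
    {U : X → G} (hUfg : IsFG μ U) {A : Set X} (hA : MeasurableSet A) :
    μ (symmDiff (fgMap U '' A) A) ≤ μ (symmDiff A (fgMap U ⁻¹' A)) := by
  obtain ⟨hUm, hUmp, W, hWm, hWmp, hWU, hUW⟩ := hUfg
  set E := {x | fgMap W (fgMap U x) = x} with hE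
  set F := {x | fgMap U (fgMap W x) = x} with hF
  have hE0 : μ Eᶜ = 0 := by
    have := ae_iff.1 hWU
    simpa [hE, compl_setOf] using this
  have hF0 : μ Fᶜ = 0 := by
    have := ae_iff.1 hUW
    simpa [hF, compl_setOf] using this
  have h1 : symmDiff (fgMap U '' A) (fgMap W ⁻¹' A) ⊆ (fgMap U '' Eᶜ) ∪ Fᶜ := by
    rw [Set.symmDiff_def]
    rintro y (⟨⟨x, hxA, rfl⟩, hynot⟩ | ⟨hyW, hynot⟩)
    · left
      refine ⟨x, fun hxE => ?_, rfl⟩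
      exact hynot (mem_preimage.2 (by rw [show fgMap W (fgMap U x) = x from hxE]; exact hxA))
    · right
      intro hyF
      exact hynot ⟨fgMap W y, hyW, hyF⟩
  have h1null : μ (symmDiff (fgMap U '' A) (fgMap W ⁻¹' A)) = 0 := by
    refine measure_mono_null h1 (measure_union_null ?_ hF0)
    exact image_fgMap_null μ hmp U hE0
  have hWmeas : Measurable (fgMap W) := hWmp.measurable
  have h2 : μ (symmDiff (fgMap W ⁻¹' A) A) ≤ μ (symmDiff A (fgMap U ⁻¹' A)) := by
    have hmeasset : MeasurableSet (symmDiff (fgMap W ⁻¹' A) A) :=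
      ((hWmeas hA).symmDiff hA)
    rw [← hUmp.measure_preimage hmeasset.nullMeasurableSet, preimage_symmDiff]
    have hsub : symmDiff (fgMap U ⁻¹' (fgMap W ⁻¹' A)) (fgMap U ⁻¹' A) ⊆
        symmDiff A (fgMap U ⁻¹' A) ∪ Eᶜ := by
      intro x hx
      by_cases hxE : x ∈ E
      · left
        have hxeq : fgMap W (fgMap U x) = x := hxE
        rcases hx with ⟨hx1, hx2⟩ | ⟨hx1, hx2⟩
        · exact Or.inl ⟨by rwa [mem_preimage, mem_preimage, hxeq] at hx1, hx2⟩
        · exact Or.inr ⟨hx1, by rwa [mem_preimage, mem_preimage, hxeq] at hx2⟩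
      · exact Or.inr hxE
    exact (measure_mono hsub).trans (by
      rw [← add_zero (μ (symmDiff A (fgMap U ⁻¹' A)))] at *
      exact (measure_union_le _ _).trans (by rw [hE0]))
  calc μ (symmDiff (fgMap U '' A) A)
      ≤ μ (symmDiff (fgMap U '' A) (fgMap W ⁻¹' A) ∪ symmDiff (fgMap W ⁻¹' A) A) :=
        measure_mono (symmDiff_triangle _ _ _)
    _ ≤ μ (symmDiff (fgMap U '' A) (fgMap W ⁻¹' A)) + μ (symmDiff (fgMap W ⁻¹' A) A) :=
        measure_union_le _ _
    _ = μ (symmDiff (fgMap W ⁻¹' A) A) := by rw [h1null, zero_add]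
    _ ≤ μ (symmDiff A (fgMap U ⁻¹' A)) := h2

end Aux

/-- If the p.m.p. action of the countable group `G` on the standard probability space `(X, μ)` is
ergodic and not essentially transitive, then condition (b) (asymptotic commutation with every
element of the full group) implies condition (a) (asymptotic invariance of every measurable set
under `U_n°`). -/
theorem stmt_0 [Group G] [Countable G] [MeasurableSpace G] [MeasurableSingletonClass G]
    [MeasurableSpace X] [StandardBorelSpace X] [MulAction G X]
    (μ : Measure X) [IsProbabilityMeasure μ]
    (hmeas : ∀ g : G, Measurable fun x : X => g • x)
    (hmp : ∀ g : G, MeasurePreserving (fun x : X => g • x) μ μ)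
    (herg : ∀ A : Set X, MeasurableSet A → (∀ g : G, (fun x : X => g • x) ⁻¹' A = A) →
      μ A = 0 ∨ μ Aᶜ = 0)
    (hnotess : ¬ ∃ x : X, μ (MulAction.orbit G x)ᶜ = 0)
    (U : ℕ → X → G) (hU : ∀ n, IsFG μ (U n))
    (hb : ∀ V : X → G, IsFG μ V →
      Tendsto (fun n => μ {x | fgMul (U n) V x ≠ fgMul V (U n) x}) atTop (nhds 0)) :
    ∀ A : Set X, MeasurableSet A →
      Tendsto (fun n => μ (symmDiff (fgMap (U n) '' A) A)) atTop (nhds 0) := by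
  intro A hA
  obtain ⟨D, hD, hsep⟩ := exists_sep X
  have h1 : Tendsto (fun n => μ (A \ fgMap (U n) ⁻¹' A)) atTop (nhds 0) :=
    main_pre μ hmeas hmp herg hnotess hD hsep U hU hb hA
  have h2 : Tendsto (fun n => μ (Aᶜ \ fgMap (U n) ⁻¹' Aᶜ)) atTop (nhds 0) :=
    main_pre μ hmeas hmp herg hnotess hD hsep U hU hb hA.compl
  have hsum := h1.add h2
  rw [add_zero] at hsum
  refine tendsto_of_tendsto_of_tendsto_of_le_of_le tendsto_const_nhds hsum
    (fun n => zero_le) fun n => ?_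
  refine (image_symmDiff_le μ hmeas hmp (hU n) hA).trans ?_
  rw [Set.symmDiff_def]
  refine (measure_union_le _ _).trans ?_
  have heq : fgMap (U n) ⁻¹' A \ A = Aᶜ \ fgMap (U n) ⁻¹' Aᶜ := by
    ext x
    simp only [mem_diff, mem_preimage, mem_compl_iff]
    tauto
  rw [heq]

end Stmt0
end

section
/- Suppose the measure-preserving action of the countable group G on the standard probability space (X, μ) is ergodic and not essentially transitive. Then for every measurable subset A ⊆ X there exists an element V of the full group [G⋉X] such that V(x) = e for a.e. x ∈ A and V(x) ≠ e for a.e. x ∈ X ∖ A. -/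
open MeasureTheory Filter Set
open scoped ENNReal

namespace Stmt2

attribute [local instance] Classical.propDecidable

variable {G X : Type*}

/-- The transformation `U° : x ↦ U x • x` associated with a map `U : X → G`. -/
def fgMap [SMul G X] (U : X → G) : X → X := fun x => U x • x

/-- Membership in the full group `[G ⋉ X]`: `U : X → G` is measurable and the map
`U° : x ↦ U x • x` is, modulo null sets, a measure-preserving bijection of `(X, μ)`. -/
def IsFG [Group G] [MulAction G X] [MeasurableSpace G] [MeasurableSpace X]
    (μ : Measure X) (U : X → G) : Prop :=
  Measurable U ∧ MeasurePreserving (fgMap U) μ μ ∧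
    ∃ V : X → G, Measurable V ∧ MeasurePreserving (fgMap V) μ μ ∧
      (∀ᵐ x ∂μ, fgMap V (fgMap U x) = x) ∧ (∀ᵐ x ∂μ, fgMap U (fgMap V x) = x)

section Aux

variable [Group G] [MulAction G X] [MeasurableSpace X]

/-- The translate `g • C` of a set, written as a preimage. -/
def tr (g : G) (C : Set X) : Set X := (fun x => g⁻¹ • x) ⁻¹' C

lemma mem_tr {g : G} {C : Set X} {x : X} : x ∈ tr g C ↔ g⁻¹ • x ∈ C := Iff.rfl

lemma smul_mem_tr {g : G} {C : Set X} {x : X} : g • x ∈ tr g C ↔ x ∈ C := by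
  simp [tr]

/-- A candidate pair for the exhaustion: a measurable set `C ⊆ R` whose translate `g • C`
is also inside `R` and disjoint from `C`. -/
def Cand (R : Set X) (g : G) (C : Set X) : Prop :=
  MeasurableSet C ∧ C ⊆ R ∧ tr g C ⊆ R ∧ C ∩ tr g C = ∅

lemma cand_empty (R : Set X) : Cand R (1 : G) (∅ : Set X) := by
  refine ⟨MeasurableSet.empty, empty_subset _, ?_, ?_⟩ <;> simp [tr]

/-- Supremum of measures of candidate sets. -/
noncomputable def msup (μ : Measure X) (R : Set X) : ℝ≥0∞ :=
  ⨆ (p : G × Set X) (_ : Cand R p.1 p.2), μ p.2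

lemma le_msup {μ : Measure X} {R : Set X} {g : G} {C : Set X} (h : Cand R g C) :
    μ C ≤ msup (G := G) μ R :=
  le_iSup₂ (f := fun (p : G × Set X) (_ : Cand R p.1 p.2) => μ p.2) (g, C) h

lemma cand_mono {R R' : Set X} (hRR : R ⊆ R') {g : G} {C : Set X} (h : Cand R g C) :
    Cand R' g C :=
  ⟨h.1, h.2.1.trans hRR, h.2.2.1.trans hRR, h.2.2.2⟩

lemma msup_mono (μ : Measure X) {R R' : Set X} (hRR : R ⊆ R') :
    msup (G := G) μ R ≤ msup (G := G) μ R' :=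
  iSup₂_le fun p hp => le_msup (cand_mono hRR hp)

lemma msup_le_one (μ : Measure X) [IsProbabilityMeasure μ] (R : Set X) :
    msup (G := G) μ R ≤ 1 :=
  iSup₂_le fun _ _ => prob_le_one

lemma exists_cand_half (μ : Measure X) [IsProbabilityMeasure μ] (R : Set X) :
    ∃ p : G × Set X, Cand R p.1 p.2 ∧ msup (G := G) μ R ≤ 2 * μ p.2 := by
  by_cases h0 : msup (G := G) μ R = 0
  · exact ⟨(1, ∅), cand_empty R, by simp [h0]⟩
  · have htop : msup (G := G) μ R ≠ ⊤ :=
      ((msup_le_one (G := G) μ R).trans_lt (by norm_num)).ne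
    have hhalf := ENNReal.half_lt_self h0 htop
    obtain ⟨p, hp, hlt⟩ : ∃ p : G × Set X, ∃ _ : Cand R p.1 p.2,
        msup (G := G) μ R / 2 < μ p.2 := by
      simpa [msup, lt_iSup_iff] using hhalf
    refine ⟨p, hp, ?_⟩
    calc msup (G := G) μ R = 2 * (msup (G := G) μ R / 2) := by
          rw [ENNReal.mul_div_cancel (by norm_num) (by norm_num)]
      _ ≤ 2 * μ p.2 := mul_le_mul_right hlt.le 2

end Aux

section Main

variable [Group G] [Countable G] [MeasurableSpace G] [MeasurableSingletonClass G]
    [MeasurableSpace X] [StandardBorelSpace X] [MulAction G X]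

lemma noAtoms (μ : Measure X)
    (hmeas : ∀ g : G, Measurable fun x : X => g • x)
    (herg : ∀ A : Set X, MeasurableSet A → (∀ g : G, (fun x : X => g • x) ⁻¹' A = A) →
      μ A = 0 ∨ μ Aᶜ = 0)
    (hnotess : ¬ ∃ x : X, μ (MulAction.orbit G x)ᶜ = 0)
    (x : X) : μ {x} = 0 := by
  have horb : MulAction.orbit G x = ⋃ g : G, {g • x} := by
    ext y
    simp [MulAction.mem_orbit_iff, eq_comm]
  have hmeasO : MeasurableSet (MulAction.orbit G x) := by
    rw [horb]; exact MeasurableSet.iUnion fun g => measurableSet_singleton _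
  have hinv : ∀ g : G, (fun y : X => g • y) ⁻¹' (MulAction.orbit G x) = MulAction.orbit G x := by
    intro g
    ext y
    simp only [mem_preimage, MulAction.mem_orbit_iff]
    constructor
    · rintro ⟨h, hh⟩
      exact ⟨g⁻¹ * h, by rw [mul_smul, hh, inv_smul_smul]⟩
    · rintro ⟨h, hh⟩
      exact ⟨g * h, by rw [mul_smul, hh]⟩
  rcases herg _ hmeasO hinv with h | h
  · exact measure_mono_null (singleton_subset_iff.2 (MulAction.mem_orbit_self x)) h
  · exact absurd ⟨x, h⟩ hnotess

lemma null_of_no_cand (μ : Measure X) [IsProbabilityMeasure μ]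
    (hmeas : ∀ g : G, Measurable fun x : X => g • x)
    (herg : ∀ A : Set X, MeasurableSet A → (∀ g : G, (fun x : X => g • x) ⁻¹' A = A) →
      μ A = 0 ∨ μ Aᶜ = 0)
    (hnotess : ¬ ∃ x : X, μ (MulAction.orbit G x)ᶜ = 0)
    {R : Set X} (hR : MeasurableSet R)
    (hcand : ∀ (g : G) (C : Set X), Cand R g C → μ C = 0) : μ R = 0 := by
  letI := upgradeStandardBorel X
  obtain ⟨S, hSm, hSsep⟩ : ∃ S : ℕ → Set X, (∀ n, MeasurableSet (S n)) ∧
      ∀ x y : X, (∀ n, x ∈ S n ↔ y ∈ S n) → x = y := by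
    obtain ⟨S, h1, h2⟩ := exists_seq_separating X MeasurableSet.empty univ
    exact ⟨S, h1, fun x y h => h2 x (mem_univ x) y (mem_univ y) fun n => h n⟩
  set Q : G → ℕ → Set X := fun g n =>
    R ∩ (fun x => g • x) ⁻¹' R ∩ (fun x => g • x) ⁻¹' (S n) ∩ (S n)ᶜ with hQdef
  set Q' : G → ℕ → Set X := fun g n =>
    R ∩ (fun x => g • x) ⁻¹' R ∩ ((fun x => g • x) ⁻¹' (S n))ᶜ ∩ (S n) with hQ'def
  have hQnull : ∀ (g : G) n, μ (Q g n) = 0 := by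
    intro g n
    apply hcand g
    refine ⟨((hR.inter (hR.preimage (hmeas g))).inter ((hSm n).preimage (hmeas g))).inter
      (hSm n).compl, ?_, ?_, ?_⟩
    · intro x hx; exact hx.1.1.1
    · intro x hx
      have := hx.1.1.2
      simpa [smul_inv_smul] using this
    · rw [eq_empty_iff_forall_notMem]
      rintro x ⟨hx1, hx2⟩
      have h1 : x ∉ S n := hx1.2
      have h2 : g • (g⁻¹ • x) ∈ S n := hx2.1.2
      rw [smul_inv_smul] at h2
      exact h1 h2
  have hQ'null : ∀ (g : G) n, μ (Q' g n) = 0 := by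
    intro g n
    apply hcand g
    refine ⟨((hR.inter (hR.preimage (hmeas g))).inter ((hSm n).preimage (hmeas g)).compl).inter
      (hSm n), ?_, ?_, ?_⟩
    · intro x hx; exact hx.1.1.1
    · intro x hx
      have := hx.1.1.2
      simpa [smul_inv_smul] using this
    · rw [eq_empty_iff_forall_notMem]
      rintro x ⟨hx1, hx2⟩
      have h1 : x ∈ S n := hx1.2
      have h2 : g • (g⁻¹ • x) ∉ S n := hx2.1.2
      rw [smul_inv_smul] at h2
      exact h2 h1
  set Bad : Set X := (⋃ g : G, ⋃ n, Q g n) ∪ (⋃ g : G, ⋃ n, Q' g n) with hBaddef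
  have hBadnull : μ Bad = 0 := by
    apply measure_union_null <;>
      exact measure_iUnion_null fun g => measure_iUnion_null fun n => by
        first | exact hQnull g n | exact hQ'null g n
  set R' : Set X := R \ Bad with hR'def
  have hR'm : MeasurableSet R' := by
    apply hR.diff
    apply MeasurableSet.union <;>
      refine MeasurableSet.iUnion fun g => MeasurableSet.iUnion fun n => ?_
    · exact ((hR.inter (hR.preimage (hmeas g))).inter ((hSm n).preimage (hmeas g))).inter
        (hSm n).compl
    · exact ((hR.inter (hR.preimage (hmeas g))).inter ((hSm n).preimage (hmeas g)).compl).inter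
        (hSm n)
  have hR'meas : μ R' = μ R := measure_diff_null hBadnull
  have key : ∀ x ∈ R', ∀ g : G, g • x ∈ R' → g • x = x := by
    intro x hx g hgx
    by_contra hne
    have hnall : ¬ ∀ n, (g • x ∈ S n ↔ x ∈ S n) := fun h => hne (hSsep _ _ h)
    push_neg at hnall
    obtain ⟨n, hn⟩ := hnall
    have hxR : x ∈ R := hx.1
    have hgxR : g • x ∈ R := hgx.1
    rcases hn with ⟨h1, h2⟩ | ⟨h1, h2⟩
    · have hxQ : x ∈ Q g n := ⟨⟨⟨hxR, hgxR⟩, h1⟩, h2⟩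
      exact hx.2 (Or.inl (mem_iUnion.2 ⟨g, mem_iUnion.2 ⟨n, hxQ⟩⟩))
    · have hxQ : x ∈ Q' g n := ⟨⟨⟨hxR, hgxR⟩, h1⟩, h2⟩
      exact hx.2 (Or.inr (mem_iUnion.2 ⟨g, mem_iUnion.2 ⟨n, hxQ⟩⟩))
  rw [← hR'meas]
  by_contra hpos
  have hsub : ∀ C : Set X, MeasurableSet C → C ⊆ R' → μ C = 0 ∨ μ (R' \ C) = 0 := by
    intro C hC hCR
    set Sat : Set X := ⋃ g : G, (fun x => g⁻¹ • x) ⁻¹' C with hSatdef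
    have hSatm : MeasurableSet Sat := MeasurableSet.iUnion fun g => hC.preimage (hmeas g⁻¹)
    have hCSat : C ⊆ Sat := fun x hx => mem_iUnion.2 ⟨1, by simpa using hx⟩
    have hinv : ∀ g : G, (fun x : X => g • x) ⁻¹' Sat = Sat := by
      intro g
      ext y
      simp only [hSatdef, mem_preimage, mem_iUnion]
      constructor
      · rintro ⟨h, hh⟩
        refine ⟨g⁻¹ * h, ?_⟩
        rw [mul_inv_rev, inv_inv, mul_smul]
        exact hh
      · rintro ⟨k, hk⟩
        refine ⟨g * k, ?_⟩
        rw [mul_inv_rev, mul_smul, inv_smul_smul]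
        exact hk
    rcases herg Sat hSatm hinv with h0 | h1
    · exact Or.inl (measure_mono_null hCSat h0)
    · right
      apply measure_mono_null _ h1
      intro x hx hxSat
      obtain ⟨g, hg⟩ := mem_iUnion.1 hxSat
      have hc : g⁻¹ • x ∈ R' := hCR hg
      have hgx' : g • (g⁻¹ • x) ∈ R' := by rw [smul_inv_smul]; exact hx.1
      have heq := key _ hc g hgx'
      rw [smul_inv_smul] at heq
      exact hx.2 (by rw [heq]; exact hg)
  have hWn : ∀ n, ∃ Wn : Set X, MeasurableSet Wn ∧ μ (R' \ Wn) = 0 ∧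
      (Wn = S n ∨ Wn = (S n)ᶜ) := by
    intro n
    rcases hsub (R' ∩ S n) (hR'm.inter (hSm n)) inter_subset_left with h0 | h1
    · refine ⟨(S n)ᶜ, (hSm n).compl, ?_, Or.inr rfl⟩
      rw [diff_compl]
      exact h0
    · refine ⟨S n, hSm n, ?_, Or.inl rfl⟩
      rw [← diff_self_inter]
      exact h1
  choose W hWm hWnull hWor using hWn
  set R'' : Set X := R' \ ⋃ n, (R' \ W n) with hR''def
  have hR''meas : μ R'' = μ R' := measure_diff_null (measure_iUnion_null hWnull)
  obtain ⟨x₀, hx₀⟩ : R''.Nonempty :=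
    nonempty_of_measure_ne_zero (by rw [hR''meas]; exact hpos)
  have hmemW : ∀ y ∈ R'', ∀ n, y ∈ W n := by
    intro y hy n
    by_contra hyn
    exact hy.2 (mem_iUnion.2 ⟨n, ⟨hy.1, hyn⟩⟩)
  have hsingle : R'' ⊆ {x₀} := by
    intro y hy
    have : y = x₀ := by
      apply hSsep
      intro n
      rcases hWor n with h | h
      · have h1 := hmemW y hy n
        have h2 := hmemW x₀ hx₀ n
        rw [h] at h1 h2
        exact ⟨fun _ => h2, fun _ => h1⟩
      · have h1 := hmemW y hy n
        have h2 := hmemW x₀ hx₀ n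
        rw [h] at h1 h2
        exact ⟨fun hc => absurd hc h1, fun hc => absurd hc h2⟩
    exact this
  have hle : μ R'' ≤ μ {x₀} := measure_mono hsingle
  rw [hR''meas, noAtoms μ hmeas herg hnotess x₀] at hle
  exact hpos (le_antisymm hle (zero_le))

lemma pieces (g : ℕ → G) (C D : ℕ → Set X)
    (huniq : ∀ m n x, x ∈ C m ∪ D m → x ∈ C n ∪ D n → m = n)
    (hCD : ∀ n, C n ∩ D n = ∅) :
    ∃ V : X → G, (∀ n x, x ∈ C n → V x = g n) ∧ (∀ n x, x ∈ D n → V x = (g n)⁻¹) ∧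
      ∀ x, (∀ n, x ∉ C n ∪ D n) → V x = 1 := by
  refine ⟨fun x => if h : ∃ n, x ∈ C n ∪ D n then
      (if x ∈ C h.choose then g h.choose else (g h.choose)⁻¹) else 1, ?_, ?_, ?_⟩
  · intro n x hx
    have h : ∃ k, x ∈ C k ∪ D k := ⟨n, Or.inl hx⟩
    show (if h : ∃ k, x ∈ C k ∪ D k then
      (if x ∈ C h.choose then g h.choose else (g h.choose)⁻¹) else 1) = g n
    rw [dif_pos h]
    have hk : h.choose = n := huniq _ _ x h.choose_spec (Or.inl hx)
    rw [hk, if_pos hx]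
  · intro n x hx
    have h : ∃ k, x ∈ C k ∪ D k := ⟨n, Or.inr hx⟩
    show (if h : ∃ k, x ∈ C k ∪ D k then
      (if x ∈ C h.choose then g h.choose else (g h.choose)⁻¹) else 1) = (g n)⁻¹
    rw [dif_pos h]
    have hk : h.choose = n := huniq _ _ x h.choose_spec (Or.inr hx)
    have hxC : x ∉ C n := fun hc => (eq_empty_iff_forall_notMem.1 (hCD n) x) ⟨hc, hx⟩
    rw [hk, if_neg hxC]
  · intro x hx
    show (if h : ∃ k, x ∈ C k ∪ D k then
      (if x ∈ C h.choose then g h.choose else (g h.choose)⁻¹) else 1) = 1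
    rw [dif_neg]
    rintro ⟨n, hn⟩
    exact hx n hn

end Main

/-- If the p.m.p. action of the countable group `G` on the standard probability space `(X, μ)` is
ergodic and not essentially transitive, then for every measurable `A ⊆ X` there is `V ∈ [G ⋉ X]`
with `V = e` a.e. on `A` and `V ≠ e` a.e. on `X \ A`. -/
theorem stmt_2 [Group G] [Countable G] [MeasurableSpace G] [MeasurableSingletonClass G]
    [MeasurableSpace X] [StandardBorelSpace X] [MulAction G X]
    (μ : Measure X) [IsProbabilityMeasure μ]
    (hmeas : ∀ g : G, Measurable fun x : X => g • x)
    (hmp : ∀ g : G, MeasurePreserving (fun x : X => g • x) μ μ)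
    (herg : ∀ A : Set X, MeasurableSet A → (∀ g : G, (fun x : X => g • x) ⁻¹' A = A) →
      μ A = 0 ∨ μ Aᶜ = 0)
    (hnotess : ¬ ∃ x : X, μ (MulAction.orbit G x)ᶜ = 0)
    (A : Set X) (hA : MeasurableSet A) :
    ∃ V : X → G, IsFG μ V ∧ (∀ᵐ x ∂μ, x ∈ A → V x = 1) ∧ (∀ᵐ x ∂μ, x ∉ A → V x ≠ 1) := by
  classical
  -- the exhaustion
  let rest : ℕ → Set X := fun n => Nat.rec Aᶜ
    (fun _ R => R \ (((exists_cand_half (G := G) μ R).choose.2) ∪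
      tr ((exists_cand_half (G := G) μ R).choose.1) ((exists_cand_half (G := G) μ R).choose.2))) n
  let g : ℕ → G := fun n => (exists_cand_half (G := G) μ (rest n)).choose.1
  let C : ℕ → Set X := fun n => (exists_cand_half (G := G) μ (rest n)).choose.2
  let D : ℕ → Set X := fun n => tr (g n) (C n)
  have rest_succ : ∀ n, rest (n + 1) = rest n \ (C n ∪ D n) := fun n => rfl
  have hcand : ∀ n, Cand (rest n) (g n) (C n) := fun n =>
    (exists_cand_half (G := G) μ (rest n)).choose_spec.1
  have hhalf : ∀ n, msup μ (rest n) ≤ 2 * μ (C n) := fun n =>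
    (exists_cand_half (G := G) μ (rest n)).choose_spec.2
  have hCm : ∀ n, MeasurableSet (C n) := fun n => (hcand n).1
  have hDm : ∀ n, MeasurableSet (D n) := fun n => (hCm n).preimage (hmeas (g n)⁻¹)
  have hCsub : ∀ n, C n ⊆ rest n := fun n => (hcand n).2.1
  have hDsub : ∀ n, D n ⊆ rest n := fun n => (hcand n).2.2.1
  have hCD : ∀ n, C n ∩ D n = ∅ := fun n => (hcand n).2.2.2
  have hrestm : ∀ n, MeasurableSet (rest n) := by
    intro n
    induction n with
    | zero => exact hA.compl
    | succ n ih => rw [rest_succ]; exact ih.diff ((hCm n).union (hDm n))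
  have hrest_anti : Antitone rest := antitone_nat_of_succ_le fun n => by
    rw [rest_succ]; exact diff_subset
  have huniq : ∀ m n x, x ∈ C m ∪ D m → x ∈ C n ∪ D n → m = n := by
    have key : ∀ m n (x : X), m < n → x ∈ C m ∪ D m → x ∈ C n ∪ D n → False := by
      intro m n x hmn hm hn
      have h1 : x ∈ rest n := hn.elim (fun h => hCsub n h) (fun h => hDsub n h)
      have h2 : x ∈ rest (m + 1) := hrest_anti hmn h1
      rw [rest_succ] at h2
      exact h2.2 hm
    intro m n x hm hn
    rcases lt_trichotomy m n with h | h | h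
    · exact (key m n x h hm hn).elim
    · exact h
    · exact (key n m x h hn hm).elim
  set W : Set X := ⋃ n, C n ∪ D n with hWdef
  have hWm : MeasurableSet W := MeasurableSet.iUnion fun n => (hCm n).union (hDm n)
  have hWB : W ⊆ Aᶜ := iUnion_subset fun n => union_subset
    ((hCsub n).trans (hrest_anti (Nat.zero_le n)))
    ((hDsub n).trans (hrest_anti (Nat.zero_le n)))
  obtain ⟨V, hVC, hVD, hV1⟩ := pieces g C D huniq hCD
  have hsmulD : ∀ n (x : X), g n • x ∈ D n ↔ x ∈ C n := fun n x => smul_mem_tr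
  have hgne : ∀ n (x : X), x ∈ C n ∪ D n → g n ≠ 1 := by
    intro n x hx h1
    have hDC : D n = C n := by
      show tr (g n) (C n) = C n
      rw [h1]
      ext y
      simp [tr]
    rcases hx with h | h
    · exact (eq_empty_iff_forall_notMem.1 (hCD n) x) ⟨h, hDC ▸ h⟩
    · rw [hDC] at h
      exact (eq_empty_iff_forall_notMem.1 (hCD n) x) ⟨h, hDC ▸ h⟩
  have hVne : ∀ x, x ∈ W → V x ≠ 1 := by
    intro x hx
    obtain ⟨n, hn⟩ := mem_iUnion.1 hx
    rcases hn with h | h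
    · rw [hVC n x h]
      exact hgne n x (Or.inl h)
    · rw [hVD n x h]
      intro hc
      exact hgne n x (Or.inr h) (by rwa [inv_eq_one] at hc)
  -- the involution property
  have hinvol : ∀ x, fgMap V (fgMap V x) = x := by
    intro x
    by_cases hx : ∃ n, x ∈ C n ∪ D n
    · obtain ⟨n, hn⟩ := hx
      rcases hn with h | h
      · have h2 : fgMap V x = g n • x := by
          show V x • x = g n • x
          rw [hVC n x h]
        have h3 : g n • x ∈ D n := (hsmulD n x).2 h
        rw [h2]
        show V (g n • x) • (g n • x) = x
        rw [hVD n _ h3, inv_smul_smul]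
      · have h3 : (g n)⁻¹ • x ∈ C n := h
        have h2 : fgMap V x = (g n)⁻¹ • x := by
          show V x • x = (g n)⁻¹ • x
          rw [hVD n x h]
        rw [h2]
        show V ((g n)⁻¹ • x) • ((g n)⁻¹ • x) = x
        rw [hVC n _ h3, smul_inv_smul]
    · push_neg at hx
      have h1 : V x = 1 := hV1 x hx
      have h2 : fgMap V x = x := by
        show V x • x = x
        rw [h1, one_smul]
      rw [h2, h2]
  -- measurability of V
  have hVmeas : Measurable V := by
    apply measurable_to_countable'
    intro a
    have hpre : V ⁻¹' {a} =
        (⋃ n, ((if g n = a then C n else ∅) ∪ (if (g n)⁻¹ = a then D n else ∅))) ∪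
          (if a = 1 then Wᶜ else ∅) := by
      ext x
      simp only [mem_preimage, mem_singleton_iff, mem_union, mem_iUnion]
      constructor
      · intro hVx
        by_cases hx : x ∈ W
        · obtain ⟨n, hn⟩ := mem_iUnion.1 hx
          rcases hn with h | h
          · refine Or.inl ⟨n, Or.inl ?_⟩
            have hga : g n = a := (hVC n x h).symm.trans hVx
            rw [if_pos hga]
            exact h
          · refine Or.inl ⟨n, Or.inr ?_⟩
            have hga : (g n)⁻¹ = a := (hVD n x h).symm.trans hVx
            rw [if_pos hga]
            exact h
        · refine Or.inr ?_
          have h1 : V x = 1 := hV1 x (fun n hn => hx (mem_iUnion.2 ⟨n, hn⟩))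
          have ha : a = 1 := hVx ▸ h1
          rw [if_pos ha]
          exact hx
      · rintro (⟨n, h | h⟩ | h)
        · by_cases hg : g n = a
          · rw [if_pos hg] at h
            rw [hVC n x h]
            exact hg
          · rw [if_neg hg] at h
            exact absurd h (notMem_empty x)
        · by_cases hg : (g n)⁻¹ = a
          · rw [if_pos hg] at h
            rw [hVD n x h]
            exact hg
          · rw [if_neg hg] at h
            exact absurd h (notMem_empty x)
        · by_cases ha : a = 1
          · rw [if_pos ha] at h
            rw [hV1 x (fun n hn => h (mem_iUnion.2 ⟨n, hn⟩)), ha]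
          · rw [if_neg ha] at h
            exact absurd h (notMem_empty x)
    rw [hpre]
    refine MeasurableSet.union (MeasurableSet.iUnion fun n => MeasurableSet.union ?_ ?_) ?_
    · split_ifs
      · exact hCm n
      · exact MeasurableSet.empty
    · split_ifs
      · exact hDm n
      · exact MeasurableSet.empty
    · split_ifs
      · exact hWm.compl
      · exact MeasurableSet.empty
  -- measurability of fgMap V
  have hTmeas : Measurable (fgMap V) := by
    have hs : Measurable fun p : X × G => p.2 • p.1 :=
      measurable_from_prod_countable_left fun y => hmeas y
    exact hs.comp (measurable_id.prodMk hVmeas)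
  -- the splitting of measures along the partition
  have hsplit : ∀ E : Set X, MeasurableSet E →
      μ E = (∑' n, μ (E ∩ C n) + ∑' n, μ (E ∩ D n)) + μ (E ∩ Wᶜ) := by
    intro E hE
    have hpair : Pairwise (Function.onFun Disjoint fun n => E ∩ (C n ∪ D n)) := by
      intro m n hmn
      rw [Function.onFun, Set.disjoint_left]
      intro x hxm hxn
      exact hmn (huniq m n x hxm.2 hxn.2)
    have h2 : μ (E ∩ W) = ∑' n, μ (E ∩ (C n ∪ D n)) := by
      rw [hWdef, inter_iUnion]
      exact measure_iUnion hpair fun n => hE.inter ((hCm n).union (hDm n))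
    have h3 : ∀ n, μ (E ∩ (C n ∪ D n)) = μ (E ∩ C n) + μ (E ∩ D n) := by
      intro n
      rw [inter_union_distrib_left]
      refine measure_union ?_ (hE.inter (hDm n))
      rw [Set.disjoint_left]
      intro x hx1 hx2
      exact (eq_empty_iff_forall_notMem.1 (hCD n) x) ⟨hx1.2, hx2.2⟩
    calc μ E = μ (E ∩ W) + μ (E \ W) := (measure_inter_add_diff E hWm).symm
      _ = (∑' n, μ (E ∩ (C n ∪ D n))) + μ (E ∩ Wᶜ) := by rw [h2, diff_eq]
      _ = (∑' n, (μ (E ∩ C n) + μ (E ∩ D n))) + μ (E ∩ Wᶜ) := by rw [tsum_congr h3]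
      _ = (∑' n, μ (E ∩ C n) + ∑' n, μ (E ∩ D n)) + μ (E ∩ Wᶜ) := by rw [ENNReal.tsum_add]
  -- measure preservation
  have hTpre : ∀ E : Set X, MeasurableSet E → μ (fgMap V ⁻¹' E) = μ E := by
    intro E hE
    have e1 : ∀ n, fgMap V ⁻¹' E ∩ C n = (fun x => g n • x) ⁻¹' (E ∩ D n) := by
      intro n
      ext x
      simp only [mem_inter_iff, mem_preimage]
      constructor
      · rintro ⟨h1, h2⟩
        have hfg : fgMap V x = g n • x := by
          show V x • x = g n • x
          rw [hVC n x h2]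
        exact ⟨by rw [← hfg]; exact h1, (hsmulD n x).2 h2⟩
      · rintro ⟨h1, h2⟩
        have h2' : x ∈ C n := (hsmulD n x).1 h2
        have hfg : fgMap V x = g n • x := by
          show V x • x = g n • x
          rw [hVC n x h2']
        exact ⟨by rw [hfg]; exact h1, h2'⟩
    have e2 : ∀ n, fgMap V ⁻¹' E ∩ D n = (fun x => (g n)⁻¹ • x) ⁻¹' (E ∩ C n) := by
      intro n
      ext x
      simp only [mem_inter_iff, mem_preimage]
      constructor
      · rintro ⟨h1, h2⟩
        have hfg : fgMap V x = (g n)⁻¹ • x := by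
          show V x • x = (g n)⁻¹ • x
          rw [hVD n x h2]
        exact ⟨by rw [← hfg]; exact h1, h2⟩
      · rintro ⟨h1, h2⟩
        have h2' : x ∈ D n := h2
        have hfg : fgMap V x = (g n)⁻¹ • x := by
          show V x • x = (g n)⁻¹ • x
          rw [hVD n x h2']
        exact ⟨by rw [hfg]; exact h1, h2'⟩
    have e3 : fgMap V ⁻¹' E ∩ Wᶜ = E ∩ Wᶜ := by
      ext x
      simp only [mem_inter_iff, mem_preimage, mem_compl_iff]
      constructor
      · rintro ⟨h1, h2⟩
        have hfg : fgMap V x = x := by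
          show V x • x = x
          rw [hV1 x (fun n hn => h2 (mem_iUnion.2 ⟨n, hn⟩)), one_smul]
        exact ⟨by rw [← hfg]; exact h1, h2⟩
      · rintro ⟨h1, h2⟩
        have hfg : fgMap V x = x := by
          show V x • x = x
          rw [hV1 x (fun n hn => h2 (mem_iUnion.2 ⟨n, hn⟩)), one_smul]
        exact ⟨by rw [hfg]; exact h1, h2⟩
    have t1 : ∀ n, μ (fgMap V ⁻¹' E ∩ C n) = μ (E ∩ D n) := fun n => by
      rw [e1 n]
      exact (hmp (g n)).measure_preimage (hE.inter (hDm n)).nullMeasurableSet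
    have t2 : ∀ n, μ (fgMap V ⁻¹' E ∩ D n) = μ (E ∩ C n) := fun n => by
      rw [e2 n]
      exact (hmp (g n)⁻¹).measure_preimage (hE.inter (hCm n)).nullMeasurableSet
    rw [hsplit _ (hE.preimage hTmeas), hsplit E hE, tsum_congr t1, tsum_congr t2, e3]
    congr 1
    exact add_comm _ _
  have hTmp : MeasurePreserving (fgMap V) μ μ :=
    ⟨hTmeas, Measure.ext fun E hE => by rw [Measure.map_apply hTmeas hE, hTpre E hE]⟩
  -- the leftover set is null
  have hCdisj : Pairwise (Function.onFun Disjoint C) := by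
    intro m n hmn
    rw [Function.onFun, Set.disjoint_left]
    intro x h1 h2
    exact hmn (huniq m n x (Or.inl h1) (Or.inl h2))
  have hsum : ∑' n, μ (C n) ≠ ⊤ := by
    rw [← measure_iUnion hCdisj hCm]
    exact measure_ne_top μ _
  have htend : Tendsto (fun n => 2 * μ (C n)) atTop (nhds 0) := by
    have h0 := ENNReal.tendsto_atTop_zero_of_tsum_ne_top hsum
    have h2 := ENNReal.Tendsto.const_mul (a := 2) h0 (Or.inr (by norm_num))
    simpa using h2
  have hmsup_le : ∀ n, msup (G := G) μ (⋂ k, rest k) ≤ 2 * μ (C n) := by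
    intro n
    exact le_trans (msup_mono (G := G) μ (iInter_subset _ n)) (hhalf n)
  have hmsup0 : msup (G := G) μ (⋂ k, rest k) = 0 :=
    le_antisymm (ge_of_tendsto' htend hmsup_le) (zero_le)
  have hRinf0 : μ (⋂ k, rest k) = 0 := by
    apply null_of_no_cand μ hmeas herg hnotess (MeasurableSet.iInter hrestm)
    intro g' C' hc
    have hle := le_msup (μ := μ) hc
    rw [hmsup0] at hle
    exact le_antisymm hle (zero_le)
  refine ⟨V, ⟨hVmeas, hTmp, V, hVmeas, hTmp, Eventually.of_forall hinvol,
    Eventually.of_forall hinvol⟩, ?_, ?_⟩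
  · apply Eventually.of_forall
    intro x hxA
    apply hV1
    intro n hn
    exact (hWB (mem_iUnion.2 ⟨n, hn⟩)) hxA
  · rw [ae_iff]
    apply measure_mono_null _ hRinf0
    intro x hx
    simp only [mem_setOf_eq, Classical.not_imp, not_not] at hx
    obtain ⟨hxA, hxV⟩ := hx
    have hxW : x ∉ W := fun h => hVne x h hxV
    apply mem_iInter.2
    intro n
    induction n with
    | zero => exact hxA
    | succ n ih =>
      rw [rest_succ]
      exact ⟨ih, fun h => hxW (mem_iUnion.2 ⟨n, h⟩)⟩
end Stmt2
end

section
/- Let (U_k) be a sequence in the full group [G⋉X] satisfying condition (a) (for every measurable subset A ⊆ X, μ(U_k°(A) △ A) → 0 as k → ∞), let V ∈ [ℛ], and suppose (U_k) asymptotically commutes with Ṽ. Then for every measurable map φ : X → C, the element W of [G⋉X] defined by W(x) = Ṽ(x)·φ(x) is also asymptotically commuted with by (U_k), i.e., μ({x ∈ X : (U_k·W)(x) ≠ (W·U_k)(x)}) → 0 as k → ∞. -/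
open MeasureTheory Filter Set

namespace Stmt4

variable {G Γ X : Type*}

/-- The transformation `U° : x ↦ q(U x) • x`, where `G` acts on `X` through `q : G →* Γ`. -/
def qMap [Group G] [Group Γ] [MulAction Γ X] (q : G →* Γ) (U : X → G) : X → X :=
  fun x => q (U x) • x

/-- The product `U · W` in the full group of the transformation-groupoid `G ⋉ X`
(where `G` acts through `q`): `(U·W)(x) = U(W°(x)) · W(x)`. -/
def qMul [Group G] [Group Γ] [MulAction Γ X] (q : G →* Γ) (U W : X → G) : X → G :=
  fun x => U (qMap q W x) * W x

/-- Membership in the full group `[G ⋉ X]`, `G` acting through `q`. -/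
def InFullG [Group G] [Group Γ] [MulAction Γ X] [MeasurableSpace G] [MeasurableSpace X]
    (q : G →* Γ) (μ : Measure X) (U : X → G) : Prop :=
  Measurable U ∧ MeasurePreserving (qMap q U) μ μ ∧
    ∃ W : X → G, Measurable W ∧ MeasurePreserving (qMap q W) μ μ ∧
      (∀ᵐ x ∂μ, qMap q W (qMap q U x) = x) ∧ (∀ᵐ x ∂μ, qMap q U (qMap q W x) = x)

/-- Membership in the full group `[ℛ]` of the orbit equivalence relation of `Γ ↷ (X, μ)`. -/
def InFullR (Γ : Type*) {X : Type*} [Group Γ] [MulAction Γ X] [MeasurableSpace X]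
    (μ : Measure X) (V : X → X) : Prop :=
  Measurable V ∧ MeasurePreserving V μ μ ∧
    (∃ W : X → X, Measurable W ∧ MeasurePreserving W μ μ ∧
      (∀ᵐ x ∂μ, W (V x) = x) ∧ (∀ᵐ x ∂μ, V (W x) = x)) ∧
    ∀ᵐ x ∂μ, V x ∈ MulAction.orbit Γ x

/-- Let `1 → C → G → Γ → 1` be a central extension of countable groups, `Γ ↷ (X, μ)` a free
p.m.p. action, `G` acting through `q`, and `s̄` a measurable section of the quotient over the
orbit equivalence relation `ℛ`. If `(U_k)` in `[G ⋉ X]` satisfies condition (a) and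
asymptotically commutes with `Ṽ` for some `V ∈ [ℛ]`, then for every measurable `φ : X → C`,
`(U_k)` asymptotically commutes with `W = Ṽ · φ`. -/
theorem stmt_4 [Group G] [Group Γ] [Countable G] [Countable Γ]
    [MeasurableSpace G] [MeasurableSingletonClass G]
    [MeasurableSpace X] [StandardBorelSpace X] [MulAction Γ X]
    (q : G →* Γ) (hq : Function.Surjective q) (hker : q.ker ≤ Subgroup.center G)
    (μ : Measure X) [IsProbabilityMeasure μ]
    (hmeasΓ : ∀ γ : Γ, Measurable fun x : X => γ • x)
    (hmpΓ : ∀ γ : Γ, MeasurePreserving (fun x : X => γ • x) μ μ)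
    (hfree : ∀ᵐ x ∂μ, ∀ γ : Γ, γ • x = x → γ = 1)
    (sbar : X × X → G) (hsbarMeas : Measurable sbar)
    (hsbar : ∀ γ : Γ, ∀ᵐ x ∂μ, q (sbar (γ • x, x)) • x = γ • x)
    (U : ℕ → X → G) (hU : ∀ k, InFullG q μ (U k))
    (ha : ∀ A : Set X, MeasurableSet A →
      Tendsto (fun k => μ (symmDiff (qMap q (U k) '' A) A)) atTop (nhds 0))
    (V : X → X) (hV : InFullR Γ μ V)
    (hcomm : Tendsto (fun k =>
        μ {x | qMul q (U k) (fun y => sbar (V y, y)) x ≠ qMul q (fun y => sbar (V y, y)) (U k) x})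
      atTop (nhds 0))
    (φ : X → G) (hφmeas : Measurable φ) (hφker : ∀ x, φ x ∈ q.ker) :
    Tendsto (fun k =>
        μ {x | qMul q (U k) (fun y => sbar (V y, y) * φ y) x ≠
               qMul q (fun y => sbar (V y, y) * φ y) (U k) x})
      atTop (nhds 0) := by
  classical
  have hTmp : ∀ k, MeasurePreserving (qMap q (U k)) μ μ := fun k => (hU k).2.1
  have hTm : ∀ k, Measurable (qMap q (U k)) := fun k => (hTmp k).measurable
  -- Step 1: for every g, μ (A_g \ (U_k°)⁻¹ A_g) → 0, using condition (a).
  have key : ∀ g : G,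
      Tendsto (fun k => μ ((φ ⁻¹' {g}) \ (qMap q (U k)) ⁻¹' (φ ⁻¹' {g}))) atTop (nhds 0) := by
    intro g
    have hA : MeasurableSet (φ ⁻¹' {g}) := hφmeas (measurableSet_singleton g)
    refine tendsto_of_tendsto_of_tendsto_of_le_of_le tendsto_const_nhds (ha _ hA)
      (fun k => zero_le) (fun k => ?_)
    have hsub : (φ ⁻¹' {g}) \ (qMap q (U k)) ⁻¹' (φ ⁻¹' {g}) ⊆
        (qMap q (U k)) ⁻¹' (symmDiff (qMap q (U k) '' (φ ⁻¹' {g})) (φ ⁻¹' {g})) := by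
      intro x hx
      simp only [Set.mem_preimage, Set.mem_symmDiff]
      exact Or.inl ⟨⟨x, hx.1, rfl⟩, hx.2⟩
    calc μ ((φ ⁻¹' {g}) \ (qMap q (U k)) ⁻¹' (φ ⁻¹' {g}))
        ≤ μ ((qMap q (U k)) ⁻¹'
            (symmDiff (qMap q (U k) '' (φ ⁻¹' {g})) (φ ⁻¹' {g}))) := measure_mono hsub
      _ ≤ (Measure.map (qMap q (U k)) μ)
            (symmDiff (qMap q (U k) '' (φ ⁻¹' {g})) (φ ⁻¹' {g})) :=
          Measure.le_map_apply (hTm k).aemeasurable _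
      _ = μ (symmDiff (qMap q (U k) '' (φ ⁻¹' {g})) (φ ⁻¹' {g})) := by rw [(hTmp k).map_eq]
  -- Step 2: μ {x | φ (U_k° x) ≠ φ x} → 0.
  have hS2 : Tendsto (fun k => μ {x | φ (qMap q (U k) x) ≠ φ x}) atTop (nhds 0) := by
    obtain ⟨e, he⟩ := exists_surjective_nat G
    rw [ENNReal.tendsto_atTop_zero]
    intro ε hε
    set C : ℕ → Set X := fun n => ⋂ i ∈ Finset.range (n + 1), (φ ⁻¹' {e i})ᶜ with hC
    have hCmeas : ∀ n, MeasurableSet (C n) := fun n =>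
      MeasurableSet.biInter (Finset.range (n + 1)).countable_toSet
        (fun i _ => (hφmeas (measurableSet_singleton (e i))).compl)
    have hanti : Antitone C := by
      intro m n hmn x hx
      simp only [hC, Set.mem_iInter, Finset.mem_range] at hx ⊢
      intro i hi
      exact hx i (by omega)
    have hinter : ⋂ n, C n = (∅ : Set X) := by
      ext x
      simp only [Set.mem_iInter, Set.mem_empty_iff_false, iff_false, not_forall]
      obtain ⟨i, hi⟩ := he (φ x)
      refine ⟨i, ?_⟩
      simp only [hC, Set.mem_iInter, Finset.mem_range, Set.mem_compl_iff, Set.mem_preimage,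
        Set.mem_singleton_iff, not_forall]
      exact ⟨i, by omega, by simp [hi]⟩
    have htail : Tendsto (fun n => μ (C n)) atTop (nhds 0) := by
      have h := tendsto_measure_iInter_atTop (fun n => (hCmeas n).nullMeasurableSet) hanti
        ⟨0, measure_ne_top μ _⟩
      rw [hinter] at h
      rw [measure_empty] at h; exact h
    obtain ⟨n, hn⟩ := (ENNReal.tendsto_atTop_zero.mp htail) (ε / 2)
      (ENNReal.half_pos (ne_of_gt hε))
    have hsum : Tendsto (fun k => ∑ i ∈ Finset.range (n + 1),
        μ ((φ ⁻¹' {e i}) \ (qMap q (U k)) ⁻¹' (φ ⁻¹' {e i}))) atTop (nhds 0) := by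
      have h := tendsto_finset_sum (Finset.range (n + 1)) (fun i _ => key (e i))
      simpa using h
    obtain ⟨N, hN⟩ := (ENNReal.tendsto_atTop_zero.mp hsum) (ε / 2)
      (ENNReal.half_pos (ne_of_gt hε))
    refine ⟨N, fun k hk => ?_⟩
    have hsub : {x | φ (qMap q (U k) x) ≠ φ x} ⊆
        (⋃ i ∈ Finset.range (n + 1),
          ((φ ⁻¹' {e i}) \ (qMap q (U k)) ⁻¹' (φ ⁻¹' {e i}))) ∪ C n := by
      intro x hx
      by_cases h : ∃ i ∈ Finset.range (n + 1), φ x = e i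
      · obtain ⟨i, hi, hphi⟩ := h
        refine Or.inl (Set.mem_biUnion hi ?_)
        refine ⟨by simp [hphi], ?_⟩
        simp only [Set.mem_preimage, Set.mem_singleton_iff]
        rw [← hphi]
        exact hx
      · refine Or.inr ?_
        simp only [hC, Set.mem_iInter, Set.mem_compl_iff, Set.mem_preimage,
          Set.mem_singleton_iff]
        intro i hi hphi
        exact h ⟨i, hi, hphi⟩
    calc μ {x | φ (qMap q (U k) x) ≠ φ x}
        ≤ μ (⋃ i ∈ Finset.range (n + 1),
            ((φ ⁻¹' {e i}) \ (qMap q (U k)) ⁻¹' (φ ⁻¹' {e i}))) + μ (C n) :=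
          le_trans (measure_mono hsub) (measure_union_le _ _)
      _ ≤ (∑ i ∈ Finset.range (n + 1),
            μ ((φ ⁻¹' {e i}) \ (qMap q (U k)) ⁻¹' (φ ⁻¹' {e i}))) + ε / 2 :=
          add_le_add (measure_biUnion_finset_le _ _) (hn n le_rfl)
      _ ≤ ε / 2 + ε / 2 := add_le_add (hN k hk) le_rfl
      _ = ε := ENNReal.add_halves ε
  -- Step 3: inclusion of the bad set.
  have hsubset : ∀ k,
      {x | qMul q (U k) (fun y => sbar (V y, y) * φ y) x ≠
           qMul q (fun y => sbar (V y, y) * φ y) (U k) x} ⊆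
      {x | qMul q (U k) (fun y => sbar (V y, y)) x ≠
           qMul q (fun y => sbar (V y, y)) (U k) x} ∪
      {x | φ (qMap q (U k) x) ≠ φ x} := by
    intro k x hx
    simp only [Set.mem_union, Set.mem_setOf_eq]
    by_contra h
    push_neg at h
    obtain ⟨h1, h2⟩ := h
    apply hx
    have hcent : ∀ (a : G) (y : X), a * φ y = φ y * a := fun a y =>
      Subgroup.mem_center_iff.mp (hker (hφker y)) a
    have hq1 : ∀ y : X, q (φ y) = 1 := fun y => hφker y
    have hmapeq : qMap q (fun y => sbar (V y, y) * φ y) x = qMap q (fun y => sbar (V y, y)) x := by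
      simp [qMap, hq1]
    simp only [qMul] at h1 ⊢
    rw [hmapeq]
    calc U k (qMap q (fun y => sbar (V y, y)) x) * (sbar (V x, x) * φ x)
        = (U k (qMap q (fun y => sbar (V y, y)) x) * sbar (V x, x)) * φ x := by
          rw [mul_assoc]
      _ = (sbar (V (qMap q (U k) x), qMap q (U k) x) * U k x) * φ x := by rw [h1]
      _ = sbar (V (qMap q (U k) x), qMap q (U k) x) * (U k x * φ x) := by rw [mul_assoc]
      _ = sbar (V (qMap q (U k) x), qMap q (U k) x) * (φ x * U k x) := by
          rw [hcent (U k x) x]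
      _ = sbar (V (qMap q (U k) x), qMap q (U k) x) * φ (qMap q (U k) x) * U k x := by
          rw [h2, mul_assoc]
  -- Step 4: conclude by squeezing.
  have hlim : Tendsto (fun k =>
      μ {x | qMul q (U k) (fun y => sbar (V y, y)) x ≠
             qMul q (fun y => sbar (V y, y)) (U k) x} +
      μ {x | φ (qMap q (U k) x) ≠ φ x}) atTop (nhds 0) := by
    simpa using hcomm.add hS2
  refine tendsto_of_tendsto_of_tendsto_of_le_of_le tendsto_const_nhds hlim
    (fun k => zero_le) (fun k => ?_)
  exact le_trans (measure_mono (hsubset k)) (measure_union_le _ _)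

end Stmt4
end

section
/- For all k < n, the set S_{k,n} is an equivalence relation on X: (x, x) ∈ S_{k,n} for every x ∈ X; if (y, x) ∈ S_{k,n} then (x, y) ∈ S_{k,n}; and if (z, y) ∈ S_{k,n} and (y, x) ∈ S_{k,n}, then (z, x) ∈ S_{k,n}. -/
open MeasureTheory Filter Set ENNReal

set_option synthInstance.maxHeartbeats 1000000

namespace Stmt6

/-- The transformation `V_n` flipping the `n`-th coordinate of the `X₀`-component of
`X = (∏_{i ∈ ℕ} ℤ/2ℤ) × X₁` and fixing all other coordinates. -/
def flipAt {X₁ : Type*} (n : ℕ) (z : (ℕ → ZMod 2) × X₁) : (ℕ → ZMod 2) × X₁ :=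
  (Function.update z.1 n (z.1 n + 1), z.2)

/-- The set `S_{k,n}`: pairs `(y, x)` with `y = γ • x` for (the unique) `γ ∈ Γ`, whose
`X₀`-components agree in every coordinate `> k`, and such that `γ • (V_n x) = V_n (γ • x)`. -/
def Skn (Γ : Type*) {X₁ : Type*} [Group Γ] [MulAction Γ ((ℕ → ZMod 2) × X₁)] (k n : ℕ) :
    Set (((ℕ → ZMod 2) × X₁) × ((ℕ → ZMod 2) × X₁)) :=
  {p | ∃ γ : Γ, p.1 = γ • p.2 ∧ (∀ i, k < i → p.1.1 i = p.2.1 i) ∧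
    γ • flipAt n p.2 = flipAt n (γ • p.2)}

/-- For all `k < n`, the set `S_{k,n}` is an equivalence relation on `X`. -/
theorem stmt_6 {X₁ : Type*} [MeasurableSpace X₁]
    (μ₀ : Measure (ℕ → ZMod 2)) [IsProbabilityMeasure μ₀]
    (hcyl : ∀ (s : Finset ℕ) (f : ℕ → ZMod 2),
      μ₀ {x : ℕ → ZMod 2 | ∀ i ∈ s, x i = f i} = (1 / 2 : ℝ≥0∞) ^ s.card)
    (μ₁ : Measure X₁) [IsProbabilityMeasure μ₁]
    {Γ Λ : Type*} [Group Γ] [Countable Γ] [Group Λ] [Countable Λ]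
    [MulAction Γ ((ℕ → ZMod 2) × X₁)] [MulAction Λ X₁]
    (hΓmeas : ∀ γ : Γ, Measurable fun z : (ℕ → ZMod 2) × X₁ => γ • z)
    (hΓmp : ∀ γ : Γ, MeasurePreserving (fun z : (ℕ → ZMod 2) × X₁ => γ • z)
      (μ₀.prod μ₁) (μ₀.prod μ₁))
    (hΛmp : ∀ l : Λ, MeasurePreserving (fun x : X₁ => l • x) μ₁ μ₁)
    (hfree : ∀ (γ : Γ) (z : (ℕ → ZMod 2) × X₁), γ • z = z → γ = 1)
    (horb : ∀ z w : (ℕ → ZMod 2) × X₁, w ∈ MulAction.orbit Γ z ↔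
      ({i : ℕ | z.1 i ≠ w.1 i}.Finite ∧ w.2 ∈ MulAction.orbit Λ z.2))
    (k n : ℕ) (hkn : k < n) :
    (∀ x : (ℕ → ZMod 2) × X₁, (x, x) ∈ Skn Γ k n) ∧
    (∀ x y : (ℕ → ZMod 2) × X₁, (y, x) ∈ Skn Γ k n → (x, y) ∈ Skn Γ k n) ∧
    (∀ x y z : (ℕ → ZMod 2) × X₁,
      (z, y) ∈ Skn Γ k n → (y, x) ∈ Skn Γ k n → (z, x) ∈ Skn Γ k n) := by
  refine ⟨fun x => ⟨1, by simp, fun i _ => rfl, by simp⟩, ?_, ?_⟩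
  · rintro x y ⟨γ, hyx, hcoord, hflip⟩
    dsimp only at hyx hcoord hflip ⊢
    refine ⟨γ⁻¹, ?_, fun i hi => (hcoord i hi).symm, ?_⟩
    · rw [hyx, inv_smul_smul]
    · rw [hyx, inv_smul_smul, ← hflip, inv_smul_smul]
  · rintro x y z ⟨γ₂, hzy, hc₂, hf₂⟩ ⟨γ₁, hyx, hc₁, hf₁⟩
    dsimp only at hzy hc₂ hf₂ hyx hc₁ hf₁ ⊢
    refine ⟨γ₂ * γ₁, ?_, fun i hi => (hc₂ i hi).trans (hc₁ i hi), ?_⟩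
    · rw [mul_smul, ← hyx, hzy]
    · rw [mul_smul, mul_smul, hf₁, ← hyx, hf₂, hyx]

end Stmt6
end

section
/- Fix k < n. For all x ∈ X₀^{>k} and y, y', y'' ∈ X^{≤k} for which the relevant pairs lie in the same Γ-orbit: (1) σ_{k,n}(x; y', y) belongs to C, i.e., q(σ_{k,n}(x; y', y)) = e; and (2) if ((x, y'), (x, y)) ∈ S_{k,n} and ((x, y''), (x, y')) ∈ S_{k,n}, then σ_{k,n}(x; y'', y) = σ_{k,n}(x; y'', y') · σ_{k,n}(x; y', y). -/
open MeasureTheory Filter Set ENNReal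

set_option synthInstance.maxHeartbeats 1000000
set_option maxHeartbeats 4000000

namespace Stmt8

/-- The transformation `V_n` flipping the `n`-th coordinate of the `X₀`-component of
`X = (∏_{i ∈ ℕ} ℤ/2ℤ) × X₁` and fixing all other coordinates. -/
def flipAt {X₁ : Type*} (n : ℕ) (z : (ℕ → ZMod 2) × X₁) : (ℕ → ZMod 2) × X₁ :=
  (Function.update z.1 n (z.1 n + 1), z.2)

/-- The set `S_{k,n}`: pairs `(y, x)` with `y = γ • x` for (the unique) `γ ∈ Γ`, whose
`X₀`-components agree in every coordinate `> k`, and such that `γ • (V_n x) = V_n (γ • x)`. -/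
def Skn (Γ : Type*) {X₁ : Type*} [Group Γ] [MulAction Γ ((ℕ → ZMod 2) × X₁)] (k n : ℕ) :
    Set (((ℕ → ZMod 2) × X₁) × ((ℕ → ZMod 2) × X₁)) :=
  {p | ∃ γ : Γ, p.1 = γ • p.2 ∧ (∀ i, k < i → p.1.1 i = p.2.1 i) ∧
    γ • flipAt n p.2 = flipAt n (γ • p.2)}


private lemma aux_cocycle {G : Type*} [Group G] (A B P Q R C w : G)
    (hC : ∀ g : G, g * C = C * g) (hw : ∀ g : G, g * w = w * g)
    (hwdef : w = B⁻¹ * R⁻¹ * B * Q) :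
    (B * A * C)⁻¹ * R⁻¹ * (B * A * C) * P =
      (B⁻¹ * R⁻¹ * B * Q) * (A⁻¹ * Q⁻¹ * A * P) := by
  have h1 : B⁻¹ * R⁻¹ * B = w * Q⁻¹ := by rw [hwdef]; group
  calc (B * A * C)⁻¹ * R⁻¹ * (B * A * C) * P
      = C⁻¹ * ((A⁻¹ * ((B⁻¹ * R⁻¹ * B) * A)) * C) * P := by group
    _ = C⁻¹ * (C * (A⁻¹ * ((w * Q⁻¹) * A))) * P := by
        rw [h1, hC (A⁻¹ * ((w * Q⁻¹) * A))]
    _ = A⁻¹ * w * (Q⁻¹ * (A * P)) := by group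
    _ = w * A⁻¹ * (Q⁻¹ * (A * P)) := by rw [hw A⁻¹]
    _ = (B⁻¹ * R⁻¹ * B * Q) * (A⁻¹ * Q⁻¹ * A * P) := by rw [← hwdef]; group

/-- `σ_{k,n}` takes values in `C = ker q` and restricts to a 1-cocycle on `S_{k,n}`. -/
theorem stmt_8 {G Γ : Type*} [Group G] [Group Γ] [Countable G] [Countable Γ]
    (q : G →* Γ) (hq : Function.Surjective q) (hker : q.ker ≤ Subgroup.center G)
    (s : Γ → G) (hs : ∀ γ : Γ, q (s γ) = γ) (hs1 : s 1 = 1)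
    {X₁ : Type*} [MeasurableSpace X₁]
    (μ₀ : Measure (ℕ → ZMod 2)) [IsProbabilityMeasure μ₀]
    (hcyl : ∀ (t : Finset ℕ) (f : ℕ → ZMod 2),
      μ₀ {x : ℕ → ZMod 2 | ∀ i ∈ t, x i = f i} = (1 / 2 : ℝ≥0∞) ^ t.card)
    (μ₁ : Measure X₁) [IsProbabilityMeasure μ₁]
    {Λ : Type*} [Group Λ] [Countable Λ]
    [MulAction Γ ((ℕ → ZMod 2) × X₁)] [MulAction Λ X₁]
    (hΓmeas : ∀ γ : Γ, Measurable fun z : (ℕ → ZMod 2) × X₁ => γ • z)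
    (hΓmp : ∀ γ : Γ, MeasurePreserving (fun z : (ℕ → ZMod 2) × X₁ => γ • z)
      (μ₀.prod μ₁) (μ₀.prod μ₁))
    (hΛmp : ∀ l : Λ, MeasurePreserving (fun x : X₁ => l • x) μ₁ μ₁)
    (hfree : ∀ (γ : Γ) (z : (ℕ → ZMod 2) × X₁), γ • z = z → γ = 1)
    (horb : ∀ z w : (ℕ → ZMod 2) × X₁, w ∈ MulAction.orbit Γ z ↔
      ({i : ℕ | z.1 i ≠ w.1 i}.Finite ∧ w.2 ∈ MulAction.orbit Λ z.2))
    (τ : (((ℕ → ZMod 2) × X₁) × ((ℕ → ZMod 2) × X₁)) → Γ)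
    (hτ : ∀ z w : (ℕ → ZMod 2) × X₁, w ∈ MulAction.orbit Γ z → τ (w, z) • z = w)
    (k n : ℕ) (hkn : k < n)
    (σ : ((ℕ → ZMod 2) × X₁) → ((ℕ → ZMod 2) × X₁) → G)
    (hσ : ∀ z' z : (ℕ → ZMod 2) × X₁, σ z' z =
      (s (τ (z', z)))⁻¹ * (s (τ (flipAt n z', z')))⁻¹ *
        s (τ (flipAt n z', flipAt n z)) * s (τ (flipAt n z, z))) :
    (∀ z z' : (ℕ → ZMod 2) × X₁, (∀ i, k < i → z'.1 i = z.1 i) →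
      z' ∈ MulAction.orbit Γ z → q (σ z' z) = 1) ∧
    (∀ z z' z'' : (ℕ → ZMod 2) × X₁, (z', z) ∈ Skn Γ k n → (z'', z') ∈ Skn Γ k n →
      σ z'' z = σ z'' z' * σ z' z) := by
  classical
  have huniq : ∀ (γ δ : Γ) (z : (ℕ → ZMod 2) × X₁), γ • z = δ • z → γ = δ := by
    intro γ δ z h
    have h2 : (δ⁻¹ * γ) • z = z := by rw [mul_smul, h, inv_smul_smul]
    exact (inv_mul_eq_one.mp (hfree _ _ h2)).symm
  have τeq : ∀ (z w : (ℕ → ZMod 2) × X₁) (γ : Γ), γ • z = w → τ (w, z) = γ := by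
    intro z w γ h
    have hmem : w ∈ MulAction.orbit Γ z := ⟨γ, h⟩
    exact huniq _ _ z (by rw [hτ z w hmem, h])
  have flip_mem : ∀ z : (ℕ → ZMod 2) × X₁, flipAt n z ∈ MulAction.orbit Γ z := by
    intro z
    rw [horb]
    refine ⟨(Set.finite_singleton n).subset ?_, MulAction.mem_orbit_self _⟩
    intro i hi
    simp only [Set.mem_setOf_eq, flipAt] at hi
    by_contra hne
    exact hi ((Function.update_of_ne (by simpa using hne) _ _).symm)
  have part1 : ∀ z z' : (ℕ → ZMod 2) × X₁, z' ∈ MulAction.orbit Γ z →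
      q (σ z' z) = 1 := by
    intro z z' hmem
    have hα : τ (z', z) • z = z' := hτ z z' hmem
    have hπ : τ (flipAt n z, z) • z = flipAt n z := hτ z _ (flip_mem z)
    have hβ : τ (flipAt n z', z') • z' = flipAt n z' := hτ z' _ (flip_mem z')
    have hπ' : (τ (flipAt n z, z))⁻¹ • flipAt n z = z := inv_smul_eq_iff.mpr hπ.symm
    have hmem2 : flipAt n z' ∈ MulAction.orbit Γ (flipAt n z) :=
      ⟨τ (flipAt n z', z') * τ (z', z) * (τ (flipAt n z, z))⁻¹, by
        show (τ (flipAt n z', z') * τ (z', z) * (τ (flipAt n z, z))⁻¹) • flipAt n z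
          = flipAt n z'
        rw [mul_smul, hπ', mul_smul, hα, hβ]⟩
    have hδ : τ (flipAt n z', flipAt n z) • flipAt n z = flipAt n z' := hτ _ _ hmem2
    have key : τ (flipAt n z', z') * τ (z', z)
        = τ (flipAt n z', flipAt n z) * τ (flipAt n z, z) :=
      huniq _ _ z (by rw [mul_smul, hα, hβ, mul_smul, hπ, hδ])
    have hδeq : τ (flipAt n z', flipAt n z)
        = τ (flipAt n z', z') * τ (z', z) * (τ (flipAt n z, z))⁻¹ := by
      rw [eq_mul_inv_iff_mul_eq]; exact key.symm
    rw [hσ]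
    simp only [map_mul, map_inv, hs]
    rw [hδeq]
    group
  refine ⟨fun z z' _ h => part1 z z' h, ?_⟩
  intro z z' z'' h1 h2
  simp only [Skn, Set.mem_setOf_eq] at h1 h2
  obtain ⟨γ', hA1, -, hA2⟩ := h1
  obtain ⟨γ'', hB1, -, hB2⟩ := h2
  rw [← hA1] at hA2
  rw [← hB1] at hB2
  have ht1 : τ (z', z) = γ' := τeq z z' γ' hA1.symm
  have ht2 : τ (flipAt n z', flipAt n z) = γ' := τeq _ _ γ' hA2
  have ht3 : τ (z'', z') = γ'' := τeq z' z'' γ'' hB1.symm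
  have ht4 : τ (flipAt n z'', flipAt n z') = γ'' := τeq _ _ γ'' hB2
  have ht5 : τ (z'', z) = γ'' * γ' := τeq z z'' _ (by rw [mul_smul, ← hA1, ← hB1])
  have ht6 : τ (flipAt n z'', flipAt n z) = γ'' * γ' :=
    τeq _ _ _ (by rw [mul_smul, hA2, hB2])
  have e1 : σ z' z = (s γ')⁻¹ * (s (τ (flipAt n z', z')))⁻¹ * s γ' *
      s (τ (flipAt n z, z)) := by rw [hσ, ht1, ht2]
  have e2 : σ z'' z' = (s γ'')⁻¹ * (s (τ (flipAt n z'', z'')))⁻¹ * s γ'' *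
      s (τ (flipAt n z', z')) := by rw [hσ, ht3, ht4]
  have e3 : σ z'' z = (s (γ'' * γ'))⁻¹ * (s (τ (flipAt n z'', z'')))⁻¹ *
      s (γ'' * γ') * s (τ (flipAt n z, z)) := by rw [hσ, ht5, ht6]
  have hsprod : s (γ'' * γ') =
      s γ'' * s γ' * ((s γ'' * s γ')⁻¹ * s (γ'' * γ')) := by group
  have hcC : ∀ g : G, g * ((s γ'' * s γ')⁻¹ * s (γ'' * γ')) =
      ((s γ'' * s γ')⁻¹ * s (γ'' * γ')) * g := by
    have hk : (s γ'' * s γ')⁻¹ * s (γ'' * γ') ∈ q.ker := by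
      rw [MonoidHom.mem_ker]
      simp only [map_mul, map_inv, hs]
      group
    exact fun g => Subgroup.mem_center_iff.mp (hker hk) g
  have hcw : ∀ g : G, g * σ z'' z' = σ z'' z' * g := by
    have hk : σ z'' z' ∈ q.ker := by
      rw [MonoidHom.mem_ker]
      exact part1 z' z'' ⟨γ'', hB1.symm⟩
    exact fun g => Subgroup.mem_center_iff.mp (hker hk) g
  rw [e3, e2, e1, hsprod]
  exact aux_cocycle (s γ') (s γ'') _ _ _ _ (σ z'' z') hcC hcw e2


end Stmt8
end

section
/- For n ∈ ℕ set A_n = {(x₀, x₁) ∈ X : the n-th coordinate of x₀ equals 0}. Then μ(A_n) = 1/2 and V_n(A_n) = X ∖ A_n for every n, and for every γ ∈ Γ, μ(γA_n △ A_n) → 0 as n → ∞; that is, (A_n) is an asymptotically invariant sequence for the Γ-action with μ(A_n) bounded away from 0 and 1. -/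
open MeasureTheory Filter Set ENNReal Pointwise

set_option synthInstance.maxHeartbeats 1000000
set_option maxHeartbeats 2000000

namespace Stmt10

/-- The transformation `V_n` flipping the `n`-th coordinate of the `X₀`-component of
`X = (∏_{i ∈ ℕ} ℤ/2ℤ) × X₁` and fixing all other coordinates. -/
def flipAt {X₁ : Type*} (n : ℕ) (z : (ℕ → ZMod 2) × X₁) : (ℕ → ZMod 2) × X₁ :=
  (Function.update z.1 n (z.1 n + 1), z.2)

/-- The set `A_n` of points whose `n`-th `X₀`-coordinate is `0`. -/
def coordZero (X₁ : Type*) (n : ℕ) : Set ((ℕ → ZMod 2) × X₁) := {z | z.1 n = 0}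

/-- The sets `A_n = {x₀(n) = 0}` satisfy `μ(A_n) = 1/2`, `V_n(A_n) = X ∖ A_n`, and
`μ(γ A_n △ A_n) → 0` for every `γ ∈ Γ`: they form a non-trivial asymptotically invariant
sequence for the `Γ`-action. -/
theorem stmt_10 {X₁ : Type*} [MeasurableSpace X₁]
    (μ₀ : Measure (ℕ → ZMod 2)) [IsProbabilityMeasure μ₀]
    (hcyl : ∀ (s : Finset ℕ) (f : ℕ → ZMod 2),
      μ₀ {x : ℕ → ZMod 2 | ∀ i ∈ s, x i = f i} = (1 / 2 : ℝ≥0∞) ^ s.card)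
    (μ₁ : Measure X₁) [IsProbabilityMeasure μ₁]
    {Γ Λ : Type*} [Group Γ] [Countable Γ] [Group Λ] [Countable Λ]
    [MulAction Γ ((ℕ → ZMod 2) × X₁)] [MulAction Λ X₁]
    (hΓmeas : ∀ γ : Γ, Measurable fun z : (ℕ → ZMod 2) × X₁ => γ • z)
    (hΓmp : ∀ γ : Γ, MeasurePreserving (fun z : (ℕ → ZMod 2) × X₁ => γ • z)
      (μ₀.prod μ₁) (μ₀.prod μ₁))
    (hΛmp : ∀ l : Λ, MeasurePreserving (fun x : X₁ => l • x) μ₁ μ₁)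
    (hfree : ∀ (γ : Γ) (z : (ℕ → ZMod 2) × X₁), γ • z = z → γ = 1)
    (horb : ∀ z w : (ℕ → ZMod 2) × X₁, w ∈ MulAction.orbit Γ z ↔
      ({i : ℕ | z.1 i ≠ w.1 i}.Finite ∧ w.2 ∈ MulAction.orbit Λ z.2)) :
    (∀ n : ℕ, (μ₀.prod μ₁) (coordZero X₁ n) = 1 / 2) ∧
    (∀ n : ℕ, flipAt n '' coordZero X₁ n = (coordZero X₁ n)ᶜ) ∧
    (∀ γ : Γ, Tendsto
      (fun n => (μ₀.prod μ₁) (symmDiff (γ • coordZero X₁ n) (coordZero X₁ n)))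
      atTop (nhds 0)) := by
  have hkey : ∀ x : ZMod 2, x ≠ 0 → x + 1 = 0 := by decide
  have hkey2 : ∀ x : ZMod 2, x + 1 ≠ 0 → x = 0 := by decide
  refine ⟨?_, ?_, ?_⟩
  · -- measure of A_n is 1/2
    intro n
    have hset : coordZero X₁ n =
        ({x : ℕ → ZMod 2 | ∀ i ∈ ({n} : Finset ℕ), x i = (fun _ => 0) i} ×ˢ
          (univ : Set X₁)) := by
      ext z; simp [coordZero]
    rw [hset, Measure.prod_prod, measure_univ, mul_one, hcyl]
    simp
  · -- flipAt maps A_n onto its complement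
    intro n
    ext w
    simp only [mem_image, mem_compl_iff, coordZero, mem_setOf_eq]
    constructor
    · rintro ⟨z, hz, rfl⟩
      simp only [flipAt, Function.update_self, hz, zero_add]
      decide
    · intro hw
      refine ⟨flipAt n w, ?_, ?_⟩
      · simp only [flipAt, Function.update_self]
        exact hkey _ hw
      · simp only [flipAt, Function.update_self, Function.update_idem]
        ext
        · simp only
          rw [show w.1 n + 1 + 1 = w.1 n by
            have : ∀ x : ZMod 2, x + 1 + 1 = x := by decide
            exact this _]
          rw [Function.update_eq_self]
        · rfl
  · -- asymptotic invariance
    intro γ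
    let E : ℕ → Set ((ℕ → ZMod 2) × X₁) := fun n => {z | (γ⁻¹ • z).1 n ≠ z.1 n}
    have hEmeas : ∀ n, MeasurableSet (E n) := by
      intro n
      exact (measurableSet_eq_fun
        (((measurable_pi_apply n).comp measurable_fst).comp (hΓmeas γ⁻¹))
        ((measurable_pi_apply n).comp measurable_fst)).compl
    have hsub : ∀ n, symmDiff (γ • coordZero X₁ n) (coordZero X₁ n) ⊆ E n := by
      intro n w hw
      rcases Set.mem_symmDiff.mp hw with ⟨h1, h2⟩ | ⟨h1, h2⟩
      · have h1' : (γ⁻¹ • w).1 n = 0 := mem_smul_set_iff_inv_smul_mem.mp h1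
        show (γ⁻¹ • w).1 n ≠ w.1 n
        rw [h1']
        exact fun h => h2 h.symm
      · have h2' : (γ⁻¹ • w).1 n ≠ 0 := fun h =>
          h2 (mem_smul_set_iff_inv_smul_mem.mpr h)
        show (γ⁻¹ • w).1 n ≠ w.1 n
        exact fun h => h2' (h.trans h1)
    have hE0 : Tendsto (fun n => (μ₀.prod μ₁) (E n)) atTop (nhds 0) := by
      have hdom := tendsto_lintegral_of_dominated_convergence (μ := μ₀.prod μ₁)
        (F := fun n z => (E n).indicator (1 : ((ℕ → ZMod 2) × X₁) → ℝ≥0∞) z) (f := fun _ => 0)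
        (fun _ => (1 : ℝ≥0∞))
        (fun n => (measurable_one.indicator (hEmeas n)))
        (fun n => Filter.Eventually.of_forall (fun z => Set.indicator_le_self' (fun _ _ => zero_le_one) z))
        (by simp)
        ?_
      · simpa [lintegral_indicator_one (hEmeas _)] using hdom
      · refine Filter.Eventually.of_forall (fun z => ?_)
        have horbz : (γ⁻¹ • z) ∈ MulAction.orbit Γ z := ⟨γ⁻¹, rfl⟩
        have hfin : {i : ℕ | z.1 i ≠ (γ⁻¹ • z).1 i}.Finite := ((horb z (γ⁻¹ • z)).mp horbz).1
        have hev : ∀ᶠ n in atTop, (E n).indicator (1 : ((ℕ → ZMod 2) × X₁) → ℝ≥0∞) z = 0 := by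
          rw [← Nat.cofinite_eq_atTop, eventually_cofinite]
          refine hfin.subset (fun n hn => ?_)
          simp only [mem_setOf_eq]
          intro hzn
          apply hn
          rw [Set.indicator_of_notMem]
          show ¬ (γ⁻¹ • z).1 n ≠ z.1 n
          exact not_not.mpr hzn.symm
        exact Tendsto.congr' (hev.mono fun n h => h.symm) tendsto_const_nhds
    refine tendsto_of_tendsto_of_tendsto_of_le_of_le tendsto_const_nhds hE0
      (fun n => zero_le) (fun n => measure_mono (hsub n))
  done

end Stmt10
end
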